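/- arXiv:1707.02473 — 8 statements merged into one kernel-verified Lean document; each statement's English description precedes it below -/
import Mathlib

section
/- If a graph G with n vertices and m edges is matching-decyclable, then m ≤ ⌊3n/2⌋ − 1. -/
open SimpleGraph

/-- `M` is a matching contained in the edge set of `G`. -/
def IsMatchingIn {V : Type*} (G : SimpleGraph V) (M : Set (Sym2 V)) : Prop :=
  M ⊆ G.edgeSet ∧ ∀ e ∈ M, ∀ f ∈ M, e ≠ f → ∀ v : V, v ∈ e → v ∉ f

/-- `G` is matching-decyclable: some matching `M ⊆ E(G)` has `G - M` acyclic. -/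
def MDecyclable {V : Type*} (G : SimpleGraph V) : Prop :=
  ∃ M : Set (Sym2 V), IsMatchingIn G M ∧ (G.deleteEdges M).IsAcyclic

/-- `G` is sparse: every nonempty subgraph `H` satisfies `|E(H)| ≤ ⌊3|V(H)|/2⌋ - 1`. -/
def Sparse {V : Type*} (G : SimpleGraph V) : Prop :=
  ∀ H : G.Subgraph, H.verts.Nonempty →
    Nat.card H.edgeSet ≤ 3 * Nat.card H.verts / 2 - 1

/-- A graph is 2-connected: connected, at least 3 vertices, and no cut vertex. -/
def TwoConnected {V : Type*} (G : SimpleGraph V) : Prop :=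
  G.Connected ∧ 3 ≤ Nat.card V ∧
    ∀ v : V, (((⊤ : G.Subgraph).deleteVerts {v}).coe).Connected

/-- `G` is fairly cubic: exactly two vertices of degree 2, the rest of degree 3. -/
def FairlyCubic {V : Type*} [Fintype V] (G : SimpleGraph V) [DecidableRel G.Adj] : Prop :=
  Nat.card {v : V // G.degree v = 2} = 2 ∧ ∀ v : V, G.degree v = 2 ∨ G.degree v = 3

def diamondGraph : SimpleGraph (Fin 4) :=
  SimpleGraph.fromEdgeSet {s(0,1), s(0,2), s(0,3), s(1,2), s(2,3)}

def triangleGraph : SimpleGraph (Fin 3) := ⊤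

def gemGraph : SimpleGraph (Fin 5) :=
  SimpleGraph.fromEdgeSet {s(0,1), s(1,2), s(2,3), s(0,4), s(1,4), s(2,4), s(3,4)}

def houseGraph : SimpleGraph (Fin 5) :=
  SimpleGraph.fromEdgeSet {s(0,1), s(1,2), s(2,3), s(0,3), s(0,4), s(1,4)}

def dominoGraph : SimpleGraph (Fin 6) :=
  SimpleGraph.fromEdgeSet {s(0,1), s(1,2), s(2,3), s(0,3), s(1,4), s(4,5), s(2,5)}

/-- `K_{3,3}` minus one edge. -/
def K33minus : SimpleGraph (Fin 3 ⊕ Fin 3) :=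
  SimpleGraph.fromEdgeSet
    {e ∈ (completeBipartiteGraph (Fin 3) (Fin 3)).edgeSet | e ≠ s(Sum.inl 0, Sum.inr 0)}

/-- `G` contains `H` as a (not necessarily induced) subgraph. -/
def ContainsSub {V W : Type*} (G : SimpleGraph V) (H : SimpleGraph W) : Prop :=
  ∃ B : G.Subgraph, Nonempty (B.coe ≃g H)

/-- Chordal: no induced cycle of length at least 4. -/
def Chordal {V : Type*} (G : SimpleGraph V) : Prop :=
  ∀ n : ℕ, 4 ≤ n → IsEmpty (SimpleGraph.cycleGraph n ↪g G)

/-- Distance-hereditary: no induced house, hole, domino, or gem. -/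
def DistHereditary {V : Type*} (G : SimpleGraph V) : Prop :=
  IsEmpty (houseGraph ↪g G) ∧ IsEmpty (dominoGraph ↪g G) ∧ IsEmpty (gemGraph ↪g G) ∧
    ∀ n : ℕ, 5 ≤ n → IsEmpty (SimpleGraph.cycleGraph n ↪g G)

/-- `v` is a cut vertex of `G`. -/
def IsCutVertex {V : Type*} (G : SimpleGraph V) (v : V) : Prop :=
  G.Connected ∧ ¬ (((⊤ : G.Subgraph).deleteVerts {v}).coe).Connected

/-- A block of `G`: either (the subgraph spanned by) a bridge, or a maximal
2-connected subgraph. -/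
def IsBlock {V : Type*} (G : SimpleGraph V) (B : G.Subgraph) : Prop :=
  (∃ u w : V, G.IsBridge s(u, w) ∧ B.verts = {u, w} ∧ B.edgeSet = {s(u, w)}) ∨
  (TwoConnected B.coe ∧ ∀ B' : G.Subgraph, B ≤ B' → TwoConnected B'.coe → B' = B)

/-- A leaf block: a block containing exactly one cut vertex of `G`. -/
def IsLeafBlock {V : Type*} (G : SimpleGraph V) (B : G.Subgraph) : Prop :=
  IsBlock G B ∧ ∃! v : V, v ∈ B.verts ∧ IsCutVertex G v

/-- A chain: a connected graph with exactly two leaf blocks, whose leaf blocks are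
diamonds and whose non-leaf blocks are triangles. -/
def IsChainGraph {V : Type*} (G : SimpleGraph V) : Prop :=
  G.Connected ∧
  Nat.card {B : G.Subgraph // IsLeafBlock G B} = 2 ∧
  (∀ B : G.Subgraph, IsLeafBlock G B → Nonempty (B.coe ≃g diamondGraph)) ∧
  (∀ B : G.Subgraph, IsBlock G B → ¬ IsLeafBlock G B → Nonempty (B.coe ≃g triangleGraph))


lemma forest_ncard {V : Type*} [Fintype V] [Nonempty V] (G : SimpleGraph V)
    (hG : G.IsAcyclic) : G.edgeSet.ncard ≤ Fintype.card V - 1 := by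
  classical
  -- maximal acyclic supergraph
  obtain ⟨H, hHmem, hHmax⟩ := Finset.exists_max_image
    (Finset.univ.filter fun H : SimpleGraph V => G ≤ H ∧ H.IsAcyclic)
    (fun H => H.edgeSet.ncard)
    ⟨G, by simp [hG]⟩
  simp only [Finset.mem_filter, Finset.mem_univ, true_and] at hHmem
  obtain ⟨hGH, hHacy⟩ := hHmem
  have hHconn : H.Connected := by
    rw [connected_iff]
    refine ⟨?_, inferInstance⟩
    by_contra hpre
    simp only [Preconnected, not_forall] at hpre
    obtain ⟨u, v, hreach⟩ := hpre
    have huv : u ≠ v := fun h => hreach (h ▸ Reachable.refl u)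
    set H' := H ⊔ edge u v with hH'
    have hacy' : H'.IsAcyclic := by
      intro w c hc
      by_cases he : s(u, v) ∈ c.edges
      · have := (adj_and_reachable_delete_edges_iff_exists_cycle (G := H') (v := u) (w := v)).2
          ⟨w, c, hc, he⟩
        refine hreach (this.2.mono ?_)
        intro a b hab
        simp only [hH', deleteEdges_adj, sdiff_adj, sup_adj, edge_adj, fromEdgeSet_adj, Set.mem_singleton_iff] at hab
        obtain ⟨hab1 | ⟨⟨rfl, rfl⟩ | ⟨rfl, rfl⟩, hne⟩, hnot⟩ := hab
        · exact hab1
        · exact absurd (by simp) hnot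
        · exact absurd (by simp [Sym2.eq_swap]) hnot
      · have hsub : ∀ e ∈ c.edges, e ∈ H.edgeSet := by
          intro e hec
          have := c.edges_subset_edgeSet hec
          rw [hH', edgeSet_sup, edge_edgeSet_of_ne huv] at this
          rcases this with h1 | h1
          · exact h1
          · exact absurd (h1 ▸ hec) he
        exact hHacy (c.transfer H hsub) (hc.transfer hsub)
    have hlt : H < H' := by
      refine lt_of_le_of_ne le_sup_left fun h => ?_
      have : H'.Adj u v := by
        rw [hH', sup_adj, edge_adj]
        exact Or.inr ⟨Or.inl ⟨rfl, rfl⟩, huv⟩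
      rw [← h] at this
      exact hreach this.reachable
    have hcard : H.edgeSet.ncard < H'.edgeSet.ncard := by
      apply Set.ncard_lt_ncard _ (H'.edgeSet.toFinite)
      rw [Set.ssubset_iff_of_subset (edgeSet_mono hlt.le)]
      have : H'.Adj u v := by
        rw [hH', sup_adj, edge_adj]
        exact Or.inr ⟨Or.inl ⟨rfl, rfl⟩, huv⟩
      exact ⟨s(u, v), this, fun h => hreach (H.mem_edgeSet.mp h).reachable⟩
    have := hHmax H' (by simp only [Finset.mem_filter, Finset.mem_univ, true_and]; exact ⟨hGH.trans le_sup_left, hacy'⟩)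
    omega
  have hTree : H.IsTree := ⟨hHconn, hHacy⟩
  have : Fintype H.edgeSet := (H.edgeSet.toFinite).fintype
  have hcard := hTree.card_edgeFinset
  have h1 : H.edgeSet.ncard = H.edgeFinset.card := by
    rw [Set.ncard_eq_toFinset_card']; congr 1
  have h2 : G.edgeSet.ncard ≤ H.edgeSet.ncard :=
    Set.ncard_le_ncard (edgeSet_mono hGH) (H.edgeSet.toFinite)
  omega

theorem stmt1 {V : Type*} [Fintype V] [Nonempty V] (G : SimpleGraph V)
    [DecidableRel G.Adj] (h : MDecyclable G) :
    G.edgeFinset.card ≤ 3 * Fintype.card V / 2 - 1 := by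
  classical
  obtain ⟨M, ⟨hMsub, hMdisj⟩, hacy⟩ := h
  set n := Fintype.card V with hn
  have hn1 : 1 ≤ n := Fintype.card_pos
  have hMfin : M.Finite := Set.Finite.subset (Set.toFinite _) hMsub
  set Mf : Finset (Sym2 V) := hMfin.toFinset with hMf
  set fE : Sym2 V → Finset V := fun e => Finset.univ.filter (· ∈ e) with hfE
  have hfE2 : ∀ e ∈ Mf, (fE e).card = 2 := by
    intro e he
    have hd : ¬ e.IsDiag := G.not_isDiag_of_mem_edgeSet (hMsub (hMfin.mem_toFinset.mp he))
    induction e with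
    | _ a b =>
      have hab : a ≠ b := by simpa [Sym2.isDiag_iff_proj_eq] using hd
      have : fE s(a, b) = {a, b} := by
        ext v
        simp [hfE, Sym2.mem_iff, or_comm]
      rw [this, Finset.card_insert_of_notMem (by simp [hab]), Finset.card_singleton]
  -- matching bound
  have hmatch : 2 * Mf.card ≤ n := by
    have hdisj : ∀ e ∈ Mf, ∀ f ∈ Mf, e ≠ f → Disjoint (fE e) (fE f) := by
      intro e he f hf hef
      rw [Finset.disjoint_left]
      intro v hv hv'
      simp only [hfE, Finset.mem_filter] at hv hv'
      exact hMdisj e (hMfin.mem_toFinset.mp he) f (hMfin.mem_toFinset.mp hf) hef v hv.2 hv'.2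
    calc 2 * Mf.card = ∑ e ∈ Mf, (fE e).card := by
          rw [Finset.sum_congr rfl hfE2, Finset.sum_const, smul_eq_mul, mul_comm]
      _ = (Mf.biUnion fE).card := (Finset.card_biUnion hdisj).symm
      _ ≤ n := by rw [hn]; exact Finset.card_le_univ _
  -- acyclic bound
  have hforest : (G.deleteEdges M).edgeSet.ncard ≤ n - 1 := forest_ncard _ hacy
  -- split edges
  have hsplit : G.edgeFinset.card ≤ (G.deleteEdges M).edgeSet.ncard + Mf.card := by
    have hsub : G.edgeFinset ⊆ ((G.deleteEdges M).edgeSet.toFinite.toFinset) ∪ Mf := by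
      intro e he
      rw [mem_edgeFinset] at he
      rw [Finset.mem_union, Set.Finite.mem_toFinset, hMf, Set.Finite.mem_toFinset,
        edgeSet_deleteEdges]
      by_cases hm : e ∈ M
      · exact Or.inr hm
      · exact Or.inl ⟨he, hm⟩
    calc G.edgeFinset.card ≤ _ := Finset.card_le_card hsub
      _ ≤ ((G.deleteEdges M).edgeSet.toFinite.toFinset).card + Mf.card :=
          Finset.card_union_le _ _
      _ = (G.deleteEdges M).edgeSet.ncard + Mf.card := by
          rw [Set.ncard_eq_toFinset_card]
  omega
end

section
/- Every 2-connected fairly cubic graph is sparse. -/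
open SimpleGraph

private lemma reach_closed {V : Type*} (G : SimpleGraph V) (T : Set V)
    (hT : ∀ a ∈ T, ∀ b, G.Adj a b → b ∈ T) {s w : V} (h : G.Reachable s w)
    (hs : s ∈ T) : w ∈ T := by
  obtain ⟨p⟩ := h
  induction p with
  | nil => exact hs
  | cons h p ih => exact ih (hT _ hs _ h)

theorem stmt4 {V : Type*} [Fintype V] (G : SimpleGraph V) [DecidableRel G.Adj]
    (h2 : TwoConnected G) (hf : FairlyCubic G) : Sparse G := by
  classical
  intro H hne
  set G' := H.spanningCoe with hG'
  letI : DecidableRel G'.Adj := Classical.decRel _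
  set S : Finset V := H.verts.toFinset with hS
  set n : ℕ := S.card with hn
  set m : ℕ := G'.edgeFinset.card with hm
  set d : V → ℕ := fun v => G'.degree v with hd
  -- translate cardinals
  have hcardv : Nat.card ↥H.verts = n := by
    rw [Nat.card_coe_set_eq, Set.ncard_eq_toFinset_card']
  have hedge : G'.edgeSet = H.edgeSet := by
    ext e; induction e using Sym2.ind; simp [Subgraph.mem_edgeSet, hG']
  have hcarde : Nat.card ↥H.edgeSet = m := by
    rw [← hedge, Nat.card_coe_set_eq, Set.ncard_eq_toFinset_card']
    rw [hm]; congr 1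
  rw [hcardv, hcarde]
  -- basic degree facts
  have hmemS : ∀ v : V, v ∈ S ↔ v ∈ H.verts := fun v => Set.mem_toFinset
  have hadj' : ∀ a b : V, G'.Adj a b ↔ H.Adj a b := fun a b => iff_of_eq (Subgraph.spanningCoe_adj H a b)
  have hzero : ∀ v : V, v ∉ S → d v = 0 := by
    intro v hv
    simp only [hd, SimpleGraph.degree, Finset.card_eq_zero]
    ext w
    simp only [mem_neighborFinset, Finset.notMem_empty, iff_false]
    intro h
    exact hv ((hmemS v).2 ((hadj' v w).1 h).fst_mem)
  have hdle : ∀ v : V, d v ≤ G.degree v := by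
    intro v
    apply Finset.card_le_card
    intro w hw
    rw [mem_neighborFinset] at hw ⊢
    exact ((hadj' v w).1 hw).adj_sub
  have hd3 : ∀ v : V, G.degree v ≤ 3 := by
    intro v; rcases hf.2 v with h | h <;> omega
  -- full neighborhood when degree is 3
  have hfull : ∀ v : V, d v = 3 → ∀ b : V, G.Adj v b → b ∈ H.verts := by
    intro v hv b hb
    have hsub : G'.neighborFinset v ⊆ G.neighborFinset v := by
      intro w hw
      rw [mem_neighborFinset] at hw ⊢
      exact ((hadj' v w).1 hw).adj_sub
    have hcard : (G.neighborFinset v).card ≤ (G'.neighborFinset v).card := by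
      have h1 : (G'.neighborFinset v).card = d v := rfl
      have h2 : (G.neighborFinset v).card = G.degree v := rfl
      have h3 := hd3 v
      omega
    have heq : G'.neighborFinset v = G.neighborFinset v :=
      Finset.eq_of_subset_of_card_le hsub hcard
    have : b ∈ G'.neighborFinset v := heq ▸ (mem_neighborFinset G v b).2 hb
    exact ((hadj' v b).1 ((mem_neighborFinset G' v b).1 this)).snd_mem
  -- degree sum
  have hsum : ∑ v ∈ S, d v = 2 * m := by
    rw [← G'.sum_degrees_eq_twice_card_edges]
    exact Finset.sum_subset (Finset.subset_univ S) (fun x _ hx => hzero x hx)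
  -- reduce goal
  have hn1 : 1 ≤ n := Finset.card_pos.2 ⟨hne.choose, (hmemS _).2 hne.choose_spec⟩
  suffices hkey : 2 * m + 2 ≤ 3 * n by
    have h1 : m + 1 ≤ 3 * n / 2 := (Nat.le_div_iff_mul_le two_pos).2 (by omega)
    omega
  by_contra hcon
  push_neg at hcon
  have hcon' : 3 * n ≤ 2 * m + 1 := by omega
  -- at most one deficient vertex
  set A : Finset V := S.filter (fun v => d v < 3) with hA
  have hAS : A ⊆ S := Finset.filter_subset _ _
  have hA1 : A.card ≤ 1 := by
    have h1 : ∑ v ∈ S, d v + A.card ≤ 3 * n := by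
      have hsplit : ∑ v ∈ S \ A, d v + ∑ v ∈ A, d v = ∑ v ∈ S, d v :=
        Finset.sum_sdiff hAS
      have h2 : ∑ v ∈ A, d v ≤ 2 * A.card := by
        have : ∑ v ∈ A, d v ≤ ∑ v ∈ A, 2 := by
          apply Finset.sum_le_sum
          intro v hv
          have := (Finset.mem_filter.1 hv).2
          omega
        simpa [Finset.sum_const, mul_comm] using this
      have h3 : ∑ v ∈ S \ A, d v ≤ 3 * (S \ A).card := by
        calc ∑ v ∈ S \ A, d v ≤ ∑ v ∈ S \ A, 3 := by
              apply Finset.sum_le_sum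
              intro v hv
              exact le_trans (hdle v) (hd3 v)
          _ = 3 * (S \ A).card := by rw [Finset.sum_const]; ring
      have h4 : (S \ A).card = n - A.card := by
        rw [Finset.card_sdiff_of_subset hAS]
      have h5 : A.card ≤ n := Finset.card_le_card hAS
      omega
    omega
  have hdeg3 : ∀ v ∈ S, v ∉ A → d v = 3 := by
    intro v hv hva
    have h1 := le_trans (hdle v) (hd3 v)
    have h2 : ¬ d v < 3 := fun h => hva (Finset.mem_filter.2 ⟨hv, h⟩)
    omega
  -- two degree-2 vertices of G
  have hnt : Nontrivial {v : V // G.degree v = 2} := by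
    have h1 := hf.1
    rw [Nat.card_eq_fintype_card] at h1
    exact Fintype.one_lt_card_iff_nontrivial.1 (by omega)
  obtain ⟨⟨w₁, hw₁⟩, ⟨w₂, hw₂⟩, hww⟩ := hnt
  have hww' : w₁ ≠ w₂ := fun h => hww (by simp [h])
  interval_cases hAc : A.card
  · -- no deficient vertex
    have hall : ∀ v ∈ H.verts, d v = 3 := by
      intro v hv
      exact hdeg3 v ((hmemS v).2 hv) (by simp [Finset.card_eq_zero.1 hAc])
    obtain ⟨s0, hs0⟩ := hne
    have hw1in : w₁ ∈ H.verts := by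
      apply reach_closed G H.verts _ (h2.1.preconnected s0 w₁) hs0
      intro a ha b hab
      exact hfull a (hall a ha) b hab
    have := hdle w₁
    rw [hall w₁ hw1in, hw₁] at this
    omega
  · -- exactly one deficient vertex u
    obtain ⟨u, huA⟩ := Finset.card_eq_one.1 hAc
    have huS : u ∈ S := hAS (huA ▸ Finset.mem_singleton_self u)
    have hdeg3' : ∀ v ∈ H.verts, v ≠ u → d v = 3 := by
      intro v hv hvu
      exact hdeg3 v ((hmemS v).2 hv) (by simp [huA, hvu])
    -- d u ≥ 2
    have hdu2 : 2 ≤ d u := by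
      have hsplit : d u + ∑ v ∈ S.erase u, d v = ∑ v ∈ S, d v :=
        Finset.add_sum_erase S d huS
      have h3 : ∑ v ∈ S.erase u, d v ≤ 3 * (S.erase u).card := by
        calc ∑ v ∈ S.erase u, d v ≤ ∑ v ∈ S.erase u, 3 :=
              Finset.sum_le_sum (fun v _ => le_trans (hdle v) (hd3 v))
          _ = 3 * (S.erase u).card := by rw [Finset.sum_const]; ring
      have h4 : (S.erase u).card = n - 1 := Finset.card_erase_of_mem huS
      omega
    -- a starting vertex in S, distinct from u
    have hpos : 0 < (G'.neighborFinset u).card := by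
      have : (G'.neighborFinset u).card = d u := rfl
      omega
    obtain ⟨s0, hs0⟩ := Finset.card_pos.1 hpos
    rw [mem_neighborFinset] at hs0
    have hs0adj : H.Adj u s0 := (hadj' u s0).1 hs0
    have hs0in : s0 ∈ H.verts := hs0adj.snd_mem
    have hs0ne : s0 ≠ u := fun h => (hs0adj.ne (h ▸ rfl))
    -- a degree-2 vertex distinct from u
    obtain ⟨w, hwdeg, hwu⟩ : ∃ w : V, G.degree w = 2 ∧ w ≠ u := by
      by_cases h : w₁ = u
      · exact ⟨w₂, hw₂, fun hc => hww' (h.trans hc.symm)⟩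
      · exact ⟨w₁, hw₁, h⟩
    have hwnot : w ∉ H.verts := by
      intro hw
      have := hdle w
      rw [hdeg3' w hw hwu, hwdeg] at this
      omega
    -- use 2-connectivity: G - u is connected
    have hconn := h2.2.2 u
    have hs0mem : s0 ∈ ((⊤ : G.Subgraph).deleteVerts {u}).verts := by
      simp [Subgraph.deleteVerts_verts, hs0ne]
    have hwmem : w ∈ ((⊤ : G.Subgraph).deleteVerts {u}).verts := by
      simp [Subgraph.deleteVerts_verts, hwu]
    have hreach := hconn.preconnected ⟨s0, hs0mem⟩ ⟨w, hwmem⟩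
    have hwin : w ∈ H.verts := by
      have := reach_closed (((⊤ : G.Subgraph).deleteVerts {u}).coe)
        {x | (x : V) ∈ H.verts} ?_ hreach hs0in
      · exact this
      · rintro ⟨a, haV⟩ ha ⟨b, hbV⟩ hab
        simp only [Set.mem_setOf_eq] at ha ⊢
        have haadj : G.Adj a b :=
          Subgraph.coe_adj_sub _ _ _ hab
        have hau : a ≠ u := by
          simp only [Subgraph.deleteVerts_verts, Subgraph.verts_top] at haV
          exact haV.2
        exact hfull a (hdeg3' a ha hau) b haadj
    exact hwnot hwin
end

section
/- The complete bipartite graph K_{2,4} is not matching-decyclable. -/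
open SimpleGraph

theorem stmt6 : ¬ MDecyclable (completeBipartiteGraph (Fin 2) (Fin 4)) := by
  classical
  rintro ⟨M, ⟨hsub, hmatch⟩, hacyc⟩
  set G := completeBipartiteGraph (Fin 2) (Fin 4)
  -- bad sets
  set B0 : Finset (Fin 4) := Finset.univ.filter (fun j => s(Sum.inl 0, Sum.inr j) ∈ M) with hB0
  set B1 : Finset (Fin 4) := Finset.univ.filter (fun j => s(Sum.inl 1, Sum.inr j) ∈ M) with hB1
  have hc0 : B0.card ≤ 1 := by
    apply Finset.card_le_one.2
    intro a ha b hb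
    simp only [hB0, Finset.mem_filter] at ha hb
    by_contra hne
    have hef : s(Sum.inl 0, Sum.inr a) ≠ s(Sum.inl (0:Fin 2), Sum.inr b) := by
      simp [Sym2.eq_iff]; intro h; exact hne (by simpa using congrArg id h)
    exact hmatch _ ha.2 _ hb.2 hef (Sum.inl 0) (by simp) (by simp)
  have hc1 : B1.card ≤ 1 := by
    apply Finset.card_le_one.2
    intro a ha b hb
    simp only [hB1, Finset.mem_filter] at ha hb
    by_contra hne
    have hef : s(Sum.inl 1, Sum.inr a) ≠ s(Sum.inl (1:Fin 2), Sum.inr b) := by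
      simp [Sym2.eq_iff]; intro h; exact hne (by simpa using congrArg id h)
    exact hmatch _ ha.2 _ hb.2 hef (Sum.inl 1) (by simp) (by simp)
  have hcard : 1 < ((B0 ∪ B1)ᶜ : Finset (Fin 4)).card := by
    have := Finset.card_union_le B0 B1
    have h4 : ((B0 ∪ B1)ᶜ : Finset (Fin 4)).card = 4 - (B0 ∪ B1).card := by
      rw [Finset.card_compl]; rfl
    omega
  obtain ⟨c, hc, d, hd, hcd⟩ := Finset.one_lt_card.1 hcard
  simp only [Finset.mem_compl, Finset.mem_union, hB0, hB1, Finset.mem_filter,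
    Finset.mem_univ, true_and, not_or] at hc hd
  -- adjacency in deleted graph
  have adj : ∀ (i : Fin 2) (j : Fin 4), s(Sum.inl i, Sum.inr j) ∉ M →
      (G.deleteEdges M).Adj (Sum.inl i) (Sum.inr j) := by
    intro i j h
    rw [SimpleGraph.deleteEdges_adj]
    exact ⟨by simp [G], h⟩
  have a0c := adj 0 c hc.1
  have a1c := adj 1 c hc.2
  have a0d := adj 0 d hd.1
  have a1d := adj 1 d hd.2
  -- two distinct paths from inl 0 to inl 1
  let p : (G.deleteEdges M).Walk (Sum.inl 0) (Sum.inl 1) :=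
    Walk.cons a0c (Walk.cons a1c.symm Walk.nil)
  let q : (G.deleteEdges M).Walk (Sum.inl 0) (Sum.inl 1) :=
    Walk.cons a0d (Walk.cons a1d.symm Walk.nil)
  have hp : p.IsPath := by
    simp [p, Walk.isPath_def, Walk.support]
  have hq : q.IsPath := by
    simp [q, Walk.isPath_def, Walk.support]
  have := hacyc.path_unique ⟨p, hp⟩ ⟨q, hq⟩
  have hsupp : p.support = q.support := by rw [show p = q from congrArg Subtype.val this]
  simp [p, q, Walk.support] at hsupp
  exact hcd (by simpa using hsupp)
end

section
/- If G is a connected matching-decyclable graph, then G has a matching M such that G − M is a tree (i.e., acyclic and connected, spanning all vertices of G). -/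
open SimpleGraph

-- chain lemma
lemma chain_min {α : Type*} {c : Set (Set α)} (hchain : IsChain (· ⊆ ·) c)
    (hne : c.Nonempty) (l : List α) (h : ∀ e ∈ l, ∃ t ∈ c, e ∉ t) :
    ∃ t ∈ c, ∀ e ∈ l, e ∉ t := by
  induction l with
  | nil => exact ⟨hne.choose, hne.choose_spec, by simp⟩
  | cons a l ih =>
    obtain ⟨t, htc, ht⟩ := ih (fun e he => h e (List.mem_cons_of_mem _ he))
    obtain ⟨t', ht'c, ht'⟩ := h a List.mem_cons_self
    rcases eq_or_ne t t' with rfl | hne'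
    · refine ⟨t, htc, fun e he' => ?_⟩
      rcases List.mem_cons.mp he' with rfl | he''
      exacts [ht', ht e he'']
    rcases hchain htc ht'c hne' with hsub | hsub
    · refine ⟨t, htc, fun e he' => ?_⟩
      rcases List.mem_cons.mp he' with rfl | he''
      exacts [fun hx => ht' (hsub hx), ht e he'']
    · refine ⟨t', ht'c, fun e he' => ?_⟩
      rcases List.mem_cons.mp he' with rfl | he''
      exacts [ht', fun hx => ht e he'' (hsub hx)]

theorem stmt7 {V : Type*} (G : SimpleGraph V) (hc : G.Connected)
    (h : MDecyclable G) :
    ∃ M : Set (Sym2 V), IsMatchingIn G M ∧ (G.deleteEdges M).IsTree := by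
  obtain ⟨M, hM, hMac⟩ := h
  set S : Set (Set (Sym2 V)) := {N | N ⊆ M ∧ (G.deleteEdges N).IsAcyclic} with hS
  have hzorn : ∃ N, N ⊆ M ∧ Minimal (· ∈ S) N := by
    apply zorn_superset_nonempty S ?_ M ⟨le_refl M, hMac⟩
    intro c hcS hchain hne
    refine ⟨⋂₀ c, ⟨?_, ?_⟩, fun s hs => Set.sInter_subset_of_mem hs⟩
    · exact (Set.sInter_subset_of_mem hne.choose_spec).trans (hcS hne.choose_spec).1
    · intro u p hp
      have hedges : ∀ e ∈ p.edges, ∃ t ∈ c, e ∉ t := by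
        intro e he
        have := p.edges_subset_edgeSet he
        rw [edgeSet_deleteEdges] at this
        obtain ⟨t, htc, hnt⟩ := by simpa using this.2
        exact ⟨t, htc, hnt⟩
      obtain ⟨t, htc, ht⟩ := chain_min hchain hne p.edges hedges
      have hsub : ∀ e ∈ p.edges, e ∈ (G.deleteEdges t).edgeSet := by
        intro e he
        have h1 := p.edges_subset_edgeSet he
        rw [edgeSet_deleteEdges] at h1 ⊢
        exact ⟨h1.1, ht e he⟩
      exact (hcS htc).2 (p.transfer _ hsub) (hp.transfer hsub)
  obtain ⟨N, hNM, hNmin⟩ := hzorn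
  have hNS : N ∈ S := hNmin.prop
  have hNac : (G.deleteEdges N).IsAcyclic := hNS.2
  -- key: every G-edge's endpoints are reachable in G - N
  have key : ∀ a b : V, G.Adj a b → (G.deleteEdges N).Reachable a b := by
    intro a b hab
    by_cases he : s(a, b) ∈ N
    · by_contra hreach
      set G' := G.deleteEdges (N \ {s(a, b)}) with hG'
      have hdel : G' \ fromEdgeSet {s(a, b)} = G.deleteEdges N := by
        show G'.deleteEdges {s(a, b)} = G.deleteEdges N
        rw [hG', deleteEdges_deleteEdges, Set.diff_union_self,
          Set.union_eq_self_of_subset_right (by simpa using he)]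
      have hG'ac : G'.IsAcyclic := by
        intro u p hp
        by_cases hmem : s(a, b) ∈ p.edges
        · have := (adj_and_reachable_delete_edges_iff_exists_cycle.mpr
            ⟨u, p, hp, hmem⟩).2
          rw [show G'.deleteEdges {s(a, b)} = G.deleteEdges N from hdel] at this
          exact hreach this
        · have hsub : ∀ e ∈ p.edges, e ∈ (G.deleteEdges N).edgeSet := by
            intro e heE
            have h1 := p.edges_subset_edgeSet heE
            rw [hG', edgeSet_deleteEdges] at h1
            rw [edgeSet_deleteEdges]
            
            refine ⟨h1.1, fun heN => h1.2 ⟨heN, ?_⟩⟩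
            rintro rfl
            exact hmem heE
          exact hNac (p.transfer _ hsub) (hp.transfer hsub)
      have : N ⊆ N \ {s(a, b)} :=
        hNmin.2 ⟨(Set.diff_subset).trans hNS.1, hG'ac⟩ Set.diff_subset
      exact (this he).2 rfl
    · exact Adj.reachable (by rw [deleteEdges_adj]; exact ⟨hab, he⟩)
  have hpre : (G.deleteEdges N).Preconnected := by
    intro u v
    obtain ⟨w⟩ := hc.preconnected u v
    induction w with
    | nil => rfl
    | cons hadj p ih => exact (key _ _ hadj).trans ih
  haveI := hc.nonempty
  exact ⟨N, ⟨hNS.1.trans hM.1, fun e heN f hfN => hM.2 e (hNS.1 heN) f (hNS.1 hfN)⟩,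
    ⟨⟨hpre⟩, hNac⟩⟩
end

section
/- A connected subcubic graph G is matching-decyclable if and only if G has a spanning tree T such that every leaf of T has degree at most 2 in G. -/
open SimpleGraph

section Aux

variable {V : Type*}

private lemma isAcyclic_of_iso {W : Type*} {A : SimpleGraph V} {B : SimpleGraph W}
    (e : A ≃g B) (h : B.IsAcyclic) : A.IsAcyclic := fun _ c hc =>
  h (c.map e.toHom) ((SimpleGraph.Walk.map_isCycle_iff_of_injective e.injective).mpr hc)

private lemma reachable_of_adj_imp {G H : SimpleGraph V} {u v : V}
    (hcon : ∀ a b : V, G.Adj a b → H.Reachable a b) (p : G.Walk u v) : H.Reachable u v := by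
  induction p with
  | nil => exact Reachable.refl _
  | cons h q ih => exact (hcon _ _ h).trans ih

private lemma acyclic_sup_edge {H : SimpleGraph V} (hH : H.IsAcyclic) {a b : V}
    (hr : ¬ H.Reachable a b) : (H ⊔ edge a b).IsAcyclic := by
  intro x c hc
  by_cases he : s(a, b) ∈ c.edges
  · have h2 := (adj_and_reachable_delete_edges_iff_exists_cycle.mpr ⟨x, c, hc, he⟩).2
    refine hr (h2.mono ?_)
    intro u v huv
    rw [deleteEdges_adj, sup_adj] at huv
    rcases huv with ⟨h1 | h1, h2'⟩
    · exact h1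
    · exfalso; apply h2'; rw [edge_adj] at h1
      rcases h1.1 with ⟨rfl, rfl⟩ | ⟨rfl, rfl⟩ <;> simp [Sym2.eq_swap]
  · refine hH (c.transfer H ?_) (hc.transfer _)
    intro e' he'
    have hmem := c.edges_subset_edgeSet he'
    induction e' with
    | h u v =>
      rw [mem_edgeSet, sup_adj] at hmem
      rw [mem_edgeSet]
      rcases hmem with h1 | h1
      · exact h1
      · exfalso
        rw [edge_adj] at h1
        rcases h1.1 with ⟨rfl, rfl⟩ | ⟨rfl, rfl⟩
        · exact he he'
        · rw [Sym2.eq_swap] at he'; exact he he'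

private lemma exists_tree_aux [Fintype V] (G : SimpleGraph V) (hG : G.Connected) :
    ∀ (n : ℕ) (H : SimpleGraph V), H ≤ G → H.IsAcyclic →
      (G.edgeSet \ H.edgeSet).ncard ≤ n → ∃ T : SimpleGraph V, H ≤ T ∧ T ≤ G ∧ T.IsTree := by
  have key : ∀ H : SimpleGraph V, ¬ H.Connected →
      ∃ a b : V, G.Adj a b ∧ ¬ H.Reachable a b := by
    intro H hnc
    by_contra hcon
    push_neg at hcon
    apply hnc
    have : Nonempty V := hG.nonempty
    refine ⟨fun u v => ?_⟩
    obtain ⟨p⟩ := hG.preconnected u v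
    exact reachable_of_adj_imp hcon p
  intro n
  induction n with
  | zero =>
    intro H hle hac hcard
    by_cases hcc : H.Connected
    · exact ⟨H, le_rfl, hle, hcc, hac⟩
    · exfalso
      obtain ⟨a, b, hab, hr⟩ := key H hcc
      have hmem : s(a, b) ∈ G.edgeSet \ H.edgeSet :=
        ⟨G.mem_edgeSet.mpr hab, fun h => hr (H.mem_edgeSet.mp h).reachable⟩
      have hpos := (Set.ncard_pos (Set.toFinite _)).mpr ⟨_, hmem⟩
      omega
  | succ n ih =>
    intro H hle hac hcard
    by_cases hcc : H.Connected
    · exact ⟨H, le_rfl, hle, hcc, hac⟩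
    · obtain ⟨a, b, hab, hr⟩ := key H hcc
      have hedge : edge a b ≤ G := by
        intro u w h
        rw [edge_adj] at h
        rcases h.1 with ⟨rfl, rfl⟩ | ⟨rfl, rfl⟩
        exacts [hab, hab.symm]
      have hle' : H ⊔ edge a b ≤ G := sup_le hle hedge
      have hac' := acyclic_sup_edge hac hr
      obtain ⟨T, h1, h2, h3⟩ := ih (H ⊔ edge a b) hle' hac' (by
        have hmem : s(a, b) ∈ G.edgeSet \ H.edgeSet :=
          ⟨G.mem_edgeSet.mpr hab, fun h => hr (H.mem_edgeSet.mp h).reachable⟩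
        have hsub : G.edgeSet \ (H ⊔ edge a b).edgeSet ⊆ (G.edgeSet \ H.edgeSet) \ {s(a, b)} := by
          intro e he
          refine ⟨⟨he.1, fun h => he.2 (edgeSet_mono le_sup_left h)⟩, ?_⟩
          intro h
          rw [Set.mem_singleton_iff] at h
          subst h
          exact he.2 ((H ⊔ edge a b).mem_edgeSet.mpr
            ((le_sup_right : edge a b ≤ H ⊔ edge a b)
              ((edge_adj a b a b).mpr ⟨Or.inl ⟨rfl, rfl⟩, hab.ne⟩)))
        have hlt : ((G.edgeSet \ H.edgeSet) \ {s(a, b)}).ncard < (G.edgeSet \ H.edgeSet).ncard :=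
          Set.ncard_diff_singleton_lt_of_mem hmem (Set.toFinite _)
        have hle2 := Set.ncard_le_ncard hsub (Set.toFinite _)
        omega)
      exact ⟨T, le_trans le_sup_left h1, h2, h3⟩

private lemma ncard_neighborSet_eq_degree [Fintype V] (G : SimpleGraph V) [DecidableRel G.Adj]
    (v : V) : (G.neighborSet v).ncard = G.degree v := by
  rw [Set.ncard_eq_toFinset_card']
  rfl

end Aux

theorem stmt8 {V : Type*} [Fintype V] (G : SimpleGraph V) [DecidableRel G.Adj]
    (hc : G.Connected) (hsub : ∀ v : V, G.degree v ≤ 3) :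
    MDecyclable G ↔
      ∃ T : G.Subgraph, T.IsSpanning ∧ T.coe.IsTree ∧
        ∀ v : V, Nat.card (T.neighborSet v) = 1 → G.degree v ≤ 2 := by
  classical
  constructor
  · rintro ⟨M, ⟨hMsub, hMmatch⟩, hMac⟩
    obtain ⟨T', hFT, hTG, hTtree⟩ := exists_tree_aux G hc _ (G.deleteEdges M)
      (deleteEdges_le M) hMac le_rfl
    have hspan : (SimpleGraph.toSubgraph T' hTG).spanningCoe = T' := rfl
    have e := (SimpleGraph.toSubgraph T' hTG).spanningCoeEquivCoeOfSpanning (SimpleGraph.toSubgraph.isSpanning T' hTG)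
    rw [hspan] at e
    refine ⟨SimpleGraph.toSubgraph T' hTG, SimpleGraph.toSubgraph.isSpanning T' hTG,
      ⟨e.connected_iff.mp hTtree.isConnected, isAcyclic_of_iso e.symm hTtree.IsAcyclic⟩, ?_⟩
    intro v hv
    have hv' : (T'.neighborSet v).ncard = 1 := by
      rw [← Nat.card_coe_set_eq]; exact hv
    have hsub2 : G.neighborSet v ⊆ T'.neighborSet v ∪ {w | s(v, w) ∈ M} := by
      intro w hw
      by_cases hm : s(v, w) ∈ M
      · exact Or.inr hm
      · exact Or.inl (hFT (deleteEdges_adj.mpr ⟨hw, hm⟩))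
    have hsing : {w | s(v, w) ∈ M}.ncard ≤ 1 := by
      rw [Set.ncard_le_one (Set.toFinite _)]
      intro w1 h1 w2 h2
      by_contra hne
      have hne2 : s(v, w1) ≠ s(v, w2) := fun h => hne (Sym2.congr_right.mp h)
      exact hMmatch _ h1 _ h2 hne2 v (Sym2.mem_mk_left v w1) (Sym2.mem_mk_left v w2)
    calc G.degree v = (G.neighborSet v).ncard := (ncard_neighborSet_eq_degree G v).symm
      _ ≤ (T'.neighborSet v ∪ {w | s(v, w) ∈ M}).ncard :=
          Set.ncard_le_ncard hsub2 (Set.toFinite _)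
      _ ≤ (T'.neighborSet v).ncard + {w | s(v, w) ∈ M}.ncard := Set.ncard_union_le _ _
      _ ≤ 2 := by omega
  · rintro ⟨T, hsp, htree, hleaf⟩
    set S := T.spanningCoe with hSdef
    have hSG : S ≤ G := T.spanningCoe_le
    have e := T.spanningCoeEquivCoeOfSpanning hsp
    have hScon : S.Connected := e.connected_iff.mpr htree.isConnected
    have hSac : S.IsAcyclic := isAcyclic_of_iso e htree.IsAcyclic
    refine ⟨G.edgeSet \ S.edgeSet, ⟨Set.diff_subset, ?_⟩, ?_⟩
    · rintro e₁ he₁ f hf hnef v hv hvf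
      obtain ⟨a, rfl⟩ := Sym2.mem_iff_exists.mp hv
      obtain ⟨b, rfl⟩ := Sym2.mem_iff_exists.mp hvf
      have hga : G.Adj v a := G.mem_edgeSet.mp he₁.1
      have hsa : a ∉ S.neighborSet v := fun h => he₁.2 (S.mem_edgeSet.mpr h)
      have hgb : G.Adj v b := G.mem_edgeSet.mp hf.1
      have hsb : b ∉ S.neighborSet v := fun h => hf.2 (S.mem_edgeSet.mpr h)
      have hab : a ≠ b := fun h => hnef (by rw [h])
      have hsubset : insert a (insert b (S.neighborSet v)) ⊆ G.neighborSet v := by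
        intro w hw
        rcases hw with rfl | rfl | hw
        · exact hga
        · exact hgb
        · exact hSG hw
      have hins : (insert a (insert b (S.neighborSet v))).ncard
          = (S.neighborSet v).ncard + 2 := by
        rw [Set.ncard_insert_of_notMem (by
            intro h
            rcases h with rfl | h
            · exact hab rfl
            · exact hsa h) (Set.toFinite _),
          Set.ncard_insert_of_notMem hsb (Set.toFinite _)]
      have hcard : (S.neighborSet v).ncard + 2 ≤ G.degree v := by
        rw [← hins, ← ncard_neighborSet_eq_degree G v]
        exact Set.ncard_le_ncard hsubset (Set.toFinite _)
      have hd3 := hsub v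
      have hle1 : (S.neighborSet v).ncard ≤ 1 := by omega
      rcases Nat.le_one_iff_eq_zero_or_eq_one.mp hle1 with h0 | h1
      · -- v would be isolated in the spanning tree, impossible
        have hemp : S.neighborSet v = ∅ := (Set.ncard_eq_zero (Set.toFinite _)).mp h0
        obtain ⟨p⟩ := hScon.preconnected v a
        cases p with
        | nil => exact hga.ne rfl
        | cons h q =>
          have : _ ∈ S.neighborSet v := h
          rw [hemp] at this
          exact this
      · have hT1 : Nat.card (T.neighborSet v) = 1 := by
          rw [Nat.card_coe_set_eq]
          exact h1
        have := hleaf v hT1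
        omega
    · have hdel : G.deleteEdges (G.edgeSet \ S.edgeSet) = S := by
        ext u w
        simp only [deleteEdges_adj, Set.mem_diff, mem_edgeSet, not_and, not_not]
        constructor
        · rintro ⟨h1, h2⟩; exact h2 h1
        · intro h; exact ⟨hSG h, fun _ => h⟩
      rw [hdel]
      exact hSac
end

section
/- Let G be a connected fairly cubic graph. Then G is matching-decyclable if and only if G has a Hamiltonian path whose two endpoints are exactly the two vertices of degree 2 in G. -/
open SimpleGraph

section AuxLemmas

variable {V : Type*}

/-- First contact lemma: a walk from outside `S` into `S` crosses an edge. -/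
lemma auxContact {G : SimpleGraph V} {S : Set V} :
    ∀ {u w : V}, G.Walk u w → u ∉ S → w ∈ S → ∃ a b, G.Adj a b ∧ a ∉ S ∧ b ∈ S := by
  intro u w q
  induction q with
  | nil => intro h1 h2; exact absurd h2 h1
  | cons h q ih =>
    intro h1 h2
    rename_i x y _
    by_cases hy : y ∈ S
    · exact ⟨x, y, h, h1, hy⟩
    · exact ih hy h2

/-- A nontrivial walk has an edge at its first endpoint. -/
lemma auxEndpointEdge {G : SimpleGraph V} {s t : V} (p : G.Walk s t) (hst : s ≠ t) :
    ∃ z, s(s, z) ∈ p.edges := by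
  obtain ⟨z, hz, q, rfl⟩ := (SimpleGraph.Walk.not_nil_iff (p := p)).mp
    (SimpleGraph.Walk.not_nil_of_ne hst)
  exact ⟨z, by simp⟩

/-- An internal vertex of a path has two distinct neighbours along the path. -/
lemma auxInternalEdges {G : SimpleGraph V} {s t x : V} {p : G.Walk s t}
    (hp : p.IsPath) (hx : x ∈ p.support) (hxs : x ≠ s) (hxt : x ≠ t) :
    ∃ y z : V, y ≠ z ∧ s(x, y) ∈ p.edges ∧ s(x, z) ∈ p.edges := by
  classical
  have hspec := p.take_spec hx
  set q1 := p.takeUntil x hx with hq1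
  set q2 := p.dropUntil x hx with hq2
  have hedges : p.edges = q1.edges ++ q2.edges := by
    rw [← hspec, SimpleGraph.Walk.edges_append]
  have hnd : (q1.support ++ q2.support.tail).Nodup := by
    rw [← SimpleGraph.Walk.support_append, hspec]
    exact hp.support_nodup
  -- z from q2
  obtain ⟨z, hadj2, q2', hq2e⟩ := (SimpleGraph.Walk.not_nil_iff (p := q2)).mp
    (SimpleGraph.Walk.not_nil_of_ne hxt)
  have hze : s(x, z) ∈ p.edges := by
    rw [hedges, List.mem_append]
    right
    rw [hq2e]
    simp
  have hzt : z ∈ q2.support.tail := by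
    rw [hq2e]
    simp [SimpleGraph.Walk.support_cons]
  -- y from q1.reverse
  obtain ⟨y, hadj1, r, hre⟩ := (SimpleGraph.Walk.not_nil_iff (p := q1.reverse)).mp
    (SimpleGraph.Walk.not_nil_of_ne hxs)
  have hye : s(x, y) ∈ p.edges := by
    rw [hedges, List.mem_append]
    left
    have : s(x, y) ∈ q1.reverse.edges := by rw [hre]; simp
    rwa [SimpleGraph.Walk.edges_reverse, List.mem_reverse] at this
  have hys : y ∈ q1.support := by
    have : y ∈ q1.reverse.support := by
      rw [hre, SimpleGraph.Walk.support_cons]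
      exact List.mem_cons_of_mem _ (SimpleGraph.Walk.start_mem_support r)
    rwa [SimpleGraph.Walk.support_reverse, List.mem_reverse] at this
  refine ⟨y, z, ?_, hye, hze⟩
  intro h
  exact (List.disjoint_of_nodup_append hnd) hys (h ▸ hzt)

/-- Adding an edge between two non-reachable vertices keeps a graph acyclic. -/
lemma auxAcyclicSupEdge {H : SimpleGraph V} (hH : H.IsAcyclic) {u v : V}
    (hr : ¬ H.Reachable u v) : (H ⊔ SimpleGraph.edge u v).IsAcyclic := by
  have huv : u ≠ v := fun h => hr (h ▸ SimpleGraph.Reachable.refl u)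
  intro w c hc
  by_cases he : s(u, v) ∈ c.edges
  · have h := (SimpleGraph.adj_and_reachable_delete_edges_iff_exists_cycle
      (G := H ⊔ SimpleGraph.edge u v) (v := u) (w := v)).2 ⟨w, c, hc, he⟩
    apply hr
    refine h.2.mono ?_
    intro a b hab
    rw [SimpleGraph.deleteEdges_adj] at hab
    replace hab : _ ∧ ¬(s(a, b) ∈ ({s(u, v)} : Set (Sym2 V)) ∧ a ≠ b) := ⟨hab.1, fun h => hab.2 h.1⟩
    obtain ⟨hab1, hab2⟩ := hab
    cases hab1 with
    | inl h' => exact h'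
    | inr h' =>
      rw [SimpleGraph.edge_adj] at h'
      exfalso
      apply hab2
      refine ⟨?_, h'.2⟩
      rcases h'.1 with ⟨rfl, rfl⟩ | ⟨rfl, rfl⟩
      · rfl
      · exact Sym2.eq_swap
  · have hce : ∀ e ∈ c.edges, e ∈ H.edgeSet := by
      intro e hec
      have h' := c.edges_subset_edgeSet hec
      rw [SimpleGraph.edgeSet_sup] at h'
      cases h' with
      | inl h'' => exact h''
      | inr h'' =>
        rw [SimpleGraph.edge_edgeSet_of_ne huv] at h''
        exact absurd (h'' ▸ hec) he
    exact hH (c.transfer H hce) (hc.transfer hce)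

/-- Acyclicity is inherited by graphs with smaller edge sets. -/
lemma auxAcyclicMono {H H' : SimpleGraph V} (hle : ∀ e ∈ H.edgeSet, e ∈ H'.edgeSet)
    (h : H'.IsAcyclic) : H.IsAcyclic := by
  intro w c hc
  exact h (c.transfer H' (fun e he => hle e (c.edges_subset_edgeSet he))) (hc.transfer _)

/-- The graph spanned by the edges of a path is acyclic. -/
lemma auxPathAcyclic {G : SimpleGraph V} {s t : V} (p : G.Walk s t)
    (hp : p.IsPath) : (SimpleGraph.fromEdgeSet {e | e ∈ p.edges}).IsAcyclic := by
  induction p with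
  | nil =>
    intro w c hc
    cases c with
    | nil => exact SimpleGraph.Walk.IsCycle.not_of_nil hc
    | cons h q =>
      rw [SimpleGraph.fromEdgeSet_adj] at h
      simp at h
  | cons h q ih =>
    rename_i a b _
    rw [SimpleGraph.Walk.cons_isPath_iff] at hp
    have hq := ih hp.1
    have hsets : ({e | e ∈ (SimpleGraph.Walk.cons h q).edges} : Set (Sym2 V)) =
        {e | e ∈ q.edges} ∪ {s(a, b)} := by
      ext e
      simp [SimpleGraph.Walk.edges_cons, or_comm]
    rw [hsets, SimpleGraph.fromEdgeSet_union]
    have hedge : SimpleGraph.fromEdgeSet {s(a, b)} = SimpleGraph.edge a b := rfl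
    rw [hedge]
    apply auxAcyclicSupEdge hq
    intro hreach
    obtain ⟨wk⟩ := hreach
    obtain ⟨z, hz, q', hq'⟩ := (SimpleGraph.Walk.not_nil_iff (p := wk)).mp
      (SimpleGraph.Walk.not_nil_of_ne h.ne)
    rw [SimpleGraph.fromEdgeSet_adj] at hz
    exact hp.2 (q.fst_mem_support_of_mem_edges hz.1)

end AuxLemmas

section AuxTree

variable {V : Type*}

lemma auxTreeNcard [Fintype V] {T : SimpleGraph V} (hT : T.IsTree) :
    T.edgeSet.ncard + 1 = Fintype.card V := by
  classical
  rw [Set.ncard_eq_toFinset_card']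
  exact hT.card_edgeFinset

/-- Every acyclic graph on a finite nonempty vertex set extends to a tree. -/
lemma auxTreeGe [Fintype V] [Nonempty V] {H : SimpleGraph V} (hH : H.IsAcyclic) :
    ∃ T : SimpleGraph V, H ≤ T ∧ T.IsTree := by
  classical
  let S : Finset (SimpleGraph V) := Finset.univ.filter fun T => H ≤ T ∧ T.IsAcyclic
  have hne : S.Nonempty := ⟨H, by simp [S, hH]⟩
  obtain ⟨T, hTS, hmax⟩ := S.exists_max_image (fun T => T.edgeSet.ncard) hne
  simp only [S, Finset.mem_filter, Finset.mem_univ, true_and] at hTS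
  refine ⟨T, hTS.1, ⟨⟨?_⟩, hTS.2⟩⟩
  intro u v
  by_contra hr
  have hne' : u ≠ v := fun h => hr (h ▸ SimpleGraph.Reachable.refl u)
  have hadj : ¬ T.Adj u v := fun h => hr h.reachable
  have hacyc' : (T ⊔ SimpleGraph.edge u v).IsAcyclic := auxAcyclicSupEdge hTS.2 hr
  have hmem : T ⊔ SimpleGraph.edge u v ∈ S := by
    simp only [S, Finset.mem_filter, Finset.mem_univ, true_and]
    exact ⟨le_trans hTS.1 le_sup_left, hacyc'⟩
  have hcard : (T ⊔ SimpleGraph.edge u v).edgeSet.ncard = T.edgeSet.ncard + 1 := by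
    rw [Set.ncard_eq_toFinset_card', Set.ncard_eq_toFinset_card']
    exact SimpleGraph.card_edgeFinset_sup_edge _ hadj hne'
  have := hmax _ hmem
  omega

lemma auxAcyclicCard [Fintype V] [Nonempty V] {H : SimpleGraph V} (hH : H.IsAcyclic) :
    H.edgeSet.ncard + 1 ≤ Fintype.card V ∧
      (Fintype.card V ≤ H.edgeSet.ncard + 1 → H.IsTree) := by
  obtain ⟨T, hle, hT⟩ := auxTreeGe hH
  have htc := auxTreeNcard hT
  have hsub : H.edgeSet ⊆ T.edgeSet := SimpleGraph.edgeSet_mono hle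
  have hcle : H.edgeSet.ncard ≤ T.edgeSet.ncard := Set.ncard_le_ncard hsub (Set.toFinite _)
  refine ⟨by omega, fun hn => ?_⟩
  have h2 : T.edgeSet.ncard ≤ H.edgeSet.ncard := by omega
  have he : H.edgeSet = T.edgeSet := Set.eq_of_subset_of_ncard_le hsub h2 (Set.toFinite _)
  have hHT : H = T := SimpleGraph.edgeSet_inj.mp he
  rw [hHT]
  exact hT

end AuxTree

theorem stmt9 {V : Type*} [Fintype V] [DecidableEq V] (G : SimpleGraph V)
    [DecidableRel G.Adj] (hc : G.Connected) (hf : FairlyCubic G) :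
    MDecyclable G ↔
      ∃ s t : V, s ≠ t ∧ G.degree s = 2 ∧ G.degree t = 2 ∧
        ∃ p : G.Walk s t, p.IsPath ∧ p.IsHamiltonian := by
  classical
  have hnV : Nonempty V := hc.nonempty
  have h2 : (Finset.univ.filter (fun v => G.degree v = 2)).card = 2 := by
    have h := hf.1
    rwa [Nat.card_eq_fintype_card, Fintype.card_subtype] at h
  obtain ⟨s, t, hst, hfilter⟩ := Finset.card_eq_two.mp h2
  have hmem : ∀ v : V, G.degree v = 2 ↔ (v = s ∨ v = t) := by
    intro v
    constructor
    · intro hv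
      have h1 : v ∈ Finset.univ.filter (fun v => G.degree v = 2) := by simp [hv]
      rw [hfilter] at h1
      simpa using h1
    · intro hv
      have h1 : v ∈ ({s, t} : Finset V) := by simpa using hv
      rw [← hfilter] at h1
      simpa using h1
  have hds : G.degree s = 2 := (hmem s).mpr (Or.inl rfl)
  have hdt : G.degree t = 2 := (hmem t).mpr (Or.inr rfl)
  have hE2 : 2 * G.edgeSet.ncard + 2 = 3 * Fintype.card V := by
    have hsum : ∑ v, G.degree v = 2 * G.edgeFinset.card :=
      G.sum_degrees_eq_twice_card_edges
    have hsum2 : ∑ v : V, (G.degree v + if G.degree v = 2 then 1 else 0)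
        = ∑ _v : V, 3 := by
      apply Finset.sum_congr rfl
      intro v _
      rcases hf.2 v with h | h <;> simp [h]
    rw [Finset.sum_add_distrib, hsum] at hsum2
    have hb : (∑ v : V, if G.degree v = 2 then (1 : ℕ) else 0)
        = (Finset.univ.filter (fun v => G.degree v = 2)).card := by
      simp [Finset.sum_boole]
    have hc3 : (∑ _v : V, (3 : ℕ)) = 3 * Fintype.card V := by
      simp [Finset.sum_const, mul_comm]
    have hEn : G.edgeFinset.card = G.edgeSet.ncard :=
      (Set.ncard_eq_toFinset_card' _).symm
    omega
  constructor
  · rintro ⟨M, ⟨hMsub, hMmatch⟩, hMacyc⟩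
    have hMfin : M.Finite := Set.toFinite M
    set T := G.deleteEdges M with hTdef
    have hTedge : T.edgeSet = G.edgeSet \ M := G.edgeSet_deleteEdges M
    set Mf : Finset (Sym2 V) := hMfin.toFinset with hMfdef
    have hMfmem : ∀ e, e ∈ Mf ↔ e ∈ M := fun e => hMfin.mem_toFinset
    set f : Sym2 V → Finset V := fun e => {e.out.1, e.out.2} with hfdef
    have hout : ∀ e : Sym2 V, s(e.out.1, e.out.2) = e := by
      intro e
      rw [Sym2.mk, e.out_eq]
    have hfmem : ∀ (e : Sym2 V) (v : V), v ∈ f e ↔ v ∈ e := by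
      intro e v
      simp only [hfdef, Finset.mem_insert, Finset.mem_singleton]
      conv_rhs => rw [← hout e]
      rw [Sym2.mem_iff]
    have hfcard : ∀ e ∈ Mf, (f e).card = 2 := by
      intro e he
      have heE : e ∈ G.edgeSet := hMsub ((hMfmem e).mp he)
      have hne : e.out.1 ≠ e.out.2 := by
        intro h
        apply G.not_isDiag_of_mem_edgeSet heE
        rw [← hout e]
        exact Sym2.mk_isDiag_iff.mpr h
      exact Finset.card_pair hne
    have hdisj : ∀ e ∈ Mf, ∀ g ∈ Mf, e ≠ g → Disjoint (f e) (f g) := by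
      intro e he g hg hne
      rw [Finset.disjoint_left]
      intro v hv hv'
      exact hMmatch e ((hMfmem e).mp he) g ((hMfmem g).mp hg) hne v
        ((hfmem e v).mp hv) ((hfmem g v).mp hv')
    have hbU : (Mf.biUnion f).card = 2 * Mf.card := by
      rw [Finset.card_biUnion hdisj, Finset.sum_congr rfl hfcard]
      simp [mul_comm]
    have hMcard : M.ncard = Mf.card := Set.ncard_eq_toFinset_card M hMfin
    have h2k : 2 * M.ncard ≤ Fintype.card V := by
      rw [hMcard, ← hbU]
      exact Finset.card_le_univ _
    have hkE : M.ncard ≤ G.edgeSet.ncard := Set.ncard_le_ncard hMsub (Set.toFinite _)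
    have hTE : T.edgeSet.ncard = G.edgeSet.ncard - M.ncard := by
      rw [hTedge]
      exact Set.ncard_diff hMsub hMfin
    obtain ⟨hTle, hTtree'⟩ := auxAcyclicCard hMacyc
    have hkey : 2 * M.ncard = Fintype.card V ∧
        T.edgeSet.ncard + 1 = Fintype.card V := by omega
    have hTtree : T.IsTree := hTtree' (by omega)
    have hcover : ∀ v : V, ∃ e ∈ M, v ∈ e := by
      intro v
      have huniv : Mf.biUnion f = Finset.univ := by
        apply Finset.eq_univ_of_card
        rw [hbU, ← hMcard]
        omega
      have hv : v ∈ Mf.biUnion f := by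
        rw [huniv]
        exact Finset.mem_univ v
      obtain ⟨e, he, hvf⟩ := Finset.mem_biUnion.mp hv
      exact ⟨e, (hMfmem e).mp he, (hfmem e v).mp hvf⟩
    have hTdeg : ∀ v : V, (T.neighborSet v).ncard + 1 = G.degree v := by
      intro v
      obtain ⟨e, heM, hve⟩ := hcover v
      set u := Sym2.Mem.other hve with hu
      have heq : s(v, u) = e := Sym2.other_spec hve
      have hadjvu : G.Adj v u := by
        rw [← SimpleGraph.mem_edgeSet, heq]
        exact hMsub heM
      have hnbr : T.neighborSet v = G.neighborSet v \ {u} := by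
        ext w
        simp only [SimpleGraph.mem_neighborSet, Set.mem_diff, Set.mem_singleton_iff, hTdef,
          SimpleGraph.deleteEdges_adj]
        constructor
        · rintro ⟨hadj, hnm⟩
          refine ⟨hadj, ?_⟩
          rintro rfl
          exact hnm (heq ▸ heM)
        · rintro ⟨hadj, hwu⟩
          refine ⟨hadj, fun hm => ?_⟩
          by_cases hef : s(v, w) = e
          · rw [← heq] at hef
            exact hwu (Sym2.congr_right.mp hef)
          · exact hMmatch _ hm _ heM hef v (Sym2.mem_mk_left v w) hve
      have hkdeg : (G.neighborSet v).ncard = G.degree v := by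
        rw [Set.ncard_eq_toFinset_card']
        rfl
      have hpos : 0 < (G.neighborSet v).ncard := by
        rw [Set.ncard_pos (Set.toFinite _)]
        exact ⟨u, hadjvu⟩
      have humem : u ∈ G.neighborSet v := hadjvu
      rw [hnbr, Set.ncard_diff_singleton_of_mem humem]
      omega
    have hTconn : T.Connected := hTtree.1
    set p : T.Walk s t := ((hTconn s t).some.toPath : T.Path s t).1 with hpdef
    have hppath : p.IsPath := ((hTconn s t).some.toPath : T.Path s t).2
    have hsupp : ∀ v : V, v ∈ p.support := by
      by_contra hnall
      push_neg at hnall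
      obtain ⟨v0, hv0⟩ := hnall
      obtain ⟨a, x, haxadj, haS, hxS⟩ := auxContact (S := {v : V | v ∈ p.support})
        ((hTconn v0 s).some) hv0 p.start_mem_support
      have hxsup : x ∈ p.support := hxS
      have hasup : a ∉ p.support := haS
      by_cases hxs : x = s
      · subst hxs
        obtain ⟨z, hz⟩ := auxEndpointEdge p hst
        have hzS : z ∈ p.support := p.snd_mem_support_of_mem_edges hz
        have hzadj : T.Adj x z := by
          rw [← SimpleGraph.mem_edgeSet]
          exact p.edges_subset_edgeSet hz
        have hsub : ({z, a} : Set V) ⊆ T.neighborSet x := by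
          intro w hw
          rcases hw with rfl | rfl
          · exact hzadj
          · exact haxadj.symm
        have h2le : 2 ≤ (T.neighborSet x).ncard := by
          rw [← Set.ncard_pair (show z ≠ a from fun h => hasup (h ▸ hzS))]
          exact Set.ncard_le_ncard hsub (Set.toFinite _)
        have h1 := hTdeg x
        rw [hds] at h1
        omega
      by_cases hxt : x = t
      · subst hxt
        obtain ⟨z, hz⟩ := auxEndpointEdge p.reverse hst.symm
        rw [SimpleGraph.Walk.edges_reverse, List.mem_reverse] at hz
        have hzS : z ∈ p.support := p.snd_mem_support_of_mem_edges hz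
        have hzadj : T.Adj x z := by
          rw [← SimpleGraph.mem_edgeSet]
          exact p.edges_subset_edgeSet hz
        have hsub : ({z, a} : Set V) ⊆ T.neighborSet x := by
          intro w hw
          rcases hw with rfl | rfl
          · exact hzadj
          · exact haxadj.symm
        have h2le : 2 ≤ (T.neighborSet x).ncard := by
          rw [← Set.ncard_pair (show z ≠ a from fun h => hasup (h ▸ hzS))]
          exact Set.ncard_le_ncard hsub (Set.toFinite _)
        have h1 := hTdeg x
        rw [hdt] at h1
        omega
      · obtain ⟨y, z, hyz, hye, hze⟩ := auxInternalEdges hppath hxsup hxs hxt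
        have hyS : y ∈ p.support := p.snd_mem_support_of_mem_edges hye
        have hzS : z ∈ p.support := p.snd_mem_support_of_mem_edges hze
        have hyadj : T.Adj x y := by
          rw [← SimpleGraph.mem_edgeSet]
          exact p.edges_subset_edgeSet hye
        have hzadj : T.Adj x z := by
          rw [← SimpleGraph.mem_edgeSet]
          exact p.edges_subset_edgeSet hze
        have hsub : ({y, z, a} : Set V) ⊆ T.neighborSet x := by
          intro w hw
          rcases hw with rfl | rfl | rfl
          · exact hyadj
          · exact hzadj
          · exact haxadj.symm
        have hya : y ≠ a := fun h => hasup (h ▸ hyS)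
        have hza : z ≠ a := fun h => hasup (h ▸ hzS)
        have h3le : 3 ≤ (T.neighborSet x).ncard := by
          have h3 : ({y, z, a} : Set V).ncard = 3 := by
            rw [Set.ncard_insert_of_notMem (by simp [hyz, hya]) (Set.toFinite _),
              Set.ncard_pair hza]
          rw [← h3]
          exact Set.ncard_le_ncard hsub (Set.toFinite _)
        have h1 := hTdeg x
        have hd3 : G.degree x = 3 := by
          rcases hf.2 x with h | h
          · rcases (hmem x).mp h with rfl | rfl
            · exact absurd rfl hxs
            · exact absurd rfl hxt
          · exact h
        rw [hd3] at h1
        omega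
    have hGle : T ≤ G := SimpleGraph.deleteEdges_le M
    have htrans : ∀ e ∈ p.edges, e ∈ G.edgeSet := fun e he =>
      SimpleGraph.edgeSet_mono hGle (p.edges_subset_edgeSet he)
    refine ⟨s, t, hst, hds, hdt, p.transfer G htrans, hppath.transfer htrans, ?_⟩
    intro v
    rw [SimpleGraph.Walk.support_transfer]
    exact List.count_eq_one_of_mem hppath.support_nodup (hsupp v)
  · rintro ⟨s', t', hst', hds', hdt', p, hp, hham⟩
    set M : Set (Sym2 V) := G.edgeSet \ {e | e ∈ p.edges} with hMdef
    have hMsub : M ⊆ G.edgeSet := Set.diff_subset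
    refine ⟨M, ⟨hMsub, ?_⟩, ?_⟩
    · intro e he g hg hne v hve hvg
      obtain ⟨a, rfl⟩ := Sym2.mem_iff_exists.mp hve
      obtain ⟨b, rfl⟩ := Sym2.mem_iff_exists.mp hvg
      have hea : s(v, a) ∈ G.edgeSet := he.1
      have heb : s(v, b) ∈ G.edgeSet := hg.1
      have hnpa : s(v, a) ∉ p.edges := he.2
      have hnpb : s(v, b) ∉ p.edges := hg.2
      have hinc : ∀ e' : Sym2 V, e' ∈ G.edgeSet → v ∈ e' → e' ∈ G.incidenceFinset v := by
        intro e' h1' h2'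
        rw [SimpleGraph.mem_incidenceFinset]
        exact ⟨h1', h2'⟩
      by_cases hvs : v = s'
      · subst hvs
        obtain ⟨z, hz⟩ := auxEndpointEdge p hst'
        have hA : ({s(v, a), s(v, b), s(v, z)} : Finset (Sym2 V)) ⊆ G.incidenceFinset v := by
          intro x hx
          simp only [Finset.mem_insert, Finset.mem_singleton] at hx
          rcases hx with rfl | rfl | rfl
          · exact hinc _ hea (Sym2.mem_mk_left v a)
          · exact hinc _ heb (Sym2.mem_mk_left v b)
          · exact hinc _ (p.edges_subset_edgeSet hz) (Sym2.mem_mk_left v z)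
        have hAcard : ({s(v, a), s(v, b), s(v, z)} : Finset (Sym2 V)).card = 3 := by
          rw [Finset.card_insert_of_notMem, Finset.card_insert_of_notMem,
            Finset.card_singleton]
          · simp only [Finset.mem_singleton]
            intro h
            exact hnpb (by rw [h]; exact hz)
          · simp only [Finset.mem_insert, Finset.mem_singleton]
            rintro (h | h)
            · exact hne h
            · exact hnpa (by rw [h]; exact hz)
        have hle := Finset.card_le_card hA
        rw [hAcard, SimpleGraph.card_incidenceFinset_eq_degree, hds'] at hle
        omega
      by_cases hvt : v = t'
      · subst hvt
        obtain ⟨z, hz⟩ := auxEndpointEdge p.reverse hst'.symm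
        rw [SimpleGraph.Walk.edges_reverse, List.mem_reverse] at hz
        have hA : ({s(v, a), s(v, b), s(v, z)} : Finset (Sym2 V)) ⊆ G.incidenceFinset v := by
          intro x hx
          simp only [Finset.mem_insert, Finset.mem_singleton] at hx
          rcases hx with rfl | rfl | rfl
          · exact hinc _ hea (Sym2.mem_mk_left v a)
          · exact hinc _ heb (Sym2.mem_mk_left v b)
          · exact hinc _ (p.edges_subset_edgeSet hz) (Sym2.mem_mk_left v z)
        have hAcard : ({s(v, a), s(v, b), s(v, z)} : Finset (Sym2 V)).card = 3 := by
          rw [Finset.card_insert_of_notMem, Finset.card_insert_of_notMem,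
            Finset.card_singleton]
          · simp only [Finset.mem_singleton]
            intro h
            exact hnpb (by rw [h]; exact hz)
          · simp only [Finset.mem_insert, Finset.mem_singleton]
            rintro (h | h)
            · exact hne h
            · exact hnpa (by rw [h]; exact hz)
        have hle := Finset.card_le_card hA
        rw [hAcard, SimpleGraph.card_incidenceFinset_eq_degree, hdt'] at hle
        omega
      · have hvsup : v ∈ p.support := hham.mem_support v
        obtain ⟨y, z, hyz, hye, hze⟩ := auxInternalEdges hp hvsup hvs hvt
        have hA : ({s(v, a), s(v, b), s(v, y), s(v, z)} : Finset (Sym2 V))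
            ⊆ G.incidenceFinset v := by
          intro x hx
          simp only [Finset.mem_insert, Finset.mem_singleton] at hx
          rcases hx with rfl | rfl | rfl | rfl
          · exact hinc _ hea (Sym2.mem_mk_left v a)
          · exact hinc _ heb (Sym2.mem_mk_left v b)
          · exact hinc _ (p.edges_subset_edgeSet hye) (Sym2.mem_mk_left v y)
          · exact hinc _ (p.edges_subset_edgeSet hze) (Sym2.mem_mk_left v z)
        have hAcard : ({s(v, a), s(v, b), s(v, y), s(v, z)} : Finset (Sym2 V)).card = 4 := by
          rw [Finset.card_insert_of_notMem, Finset.card_insert_of_notMem,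
            Finset.card_insert_of_notMem, Finset.card_singleton]
          · simp only [Finset.mem_singleton]
            intro h
            exact hyz (Sym2.congr_right.mp h)
          · simp only [Finset.mem_insert, Finset.mem_singleton]
            rintro (h | h)
            · exact hnpb (by rw [h]; exact hye)
            · exact hnpb (by rw [h]; exact hze)
          · simp only [Finset.mem_insert, Finset.mem_singleton]
            rintro (h | h | h)
            · exact hne h
            · exact hnpa (by rw [h]; exact hye)
            · exact hnpa (by rw [h]; exact hze)
        have hle := Finset.card_le_card hA
        have hd3 : G.degree v = 3 := by
          rcases hf.2 v with h | h
          · exfalso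
            have h1 := (hmem v).mp h
            have h2 := (hmem s').mp hds'
            have h3 := (hmem t').mp hdt'
            rcases h1 with h1 | h1 <;> rcases h2 with h2 | h2 <;> rcases h3 with h3 | h3 <;>
              first
                | exact hvs (h1.trans h2.symm)
                | exact hvt (h1.trans h3.symm)
                | exact hst' (h2.trans h3.symm)
          · exact h
        rw [hAcard, SimpleGraph.card_incidenceFinset_eq_degree, hd3] at hle
        omega
    · apply auxAcyclicMono (H' := SimpleGraph.fromEdgeSet {e | e ∈ p.edges}) ?_
        (auxPathAcyclic p hp)
      intro e he
      rw [SimpleGraph.edgeSet_deleteEdges] at he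
      obtain ⟨h1, h2⟩ := he
      rw [SimpleGraph.edgeSet_fromEdgeSet]
      refine ⟨?_, ?_⟩
      · by_contra h3
        exact h2 ⟨h1, h3⟩
      · exact G.not_isDiag_of_mem_edgeSet h1
end

section
/- In a gem-free chordal graph that is sparse, every cycle has length 3 or 4; equivalently, a sparse chordal graph contains no k-cycle for any k ≥ 5. -/
open SimpleGraph

/-- A combinatorial cycle of length `k`. -/
def IsCC {V : Type*} (G : SimpleGraph V) (k : ℕ) (f : ℕ → V) : Prop :=
  (∀ i < k, ∀ j < k, f i = f j → i = j) ∧ (∀ i < k, G.Adj (f i) (f ((i+1) % k)))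

theorem IsCC.rot {V : Type*} {G : SimpleGraph V} {k : ℕ} {f : ℕ → V}
    (hf : IsCC G k f) (t : ℕ) : IsCC G k (fun m => f ((t + m) % k)) := by
  obtain ⟨hinj, hadj⟩ := hf
  constructor
  · intro i hi j hj h
    have hk : 0 < k := by omega
    have h2 : (t + i) % k = (t + j) % k := hinj _ (Nat.mod_lt _ hk) _ (Nat.mod_lt _ hk) h
    have h3 : i ≡ j [MOD k] := Nat.ModEq.add_left_cancel' t h2
    rwa [Nat.ModEq, Nat.mod_eq_of_lt hi, Nat.mod_eq_of_lt hj] at h3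
  · intro i hi
    have hk : 0 < k := by omega
    have h1 := hadj ((t + i) % k) (Nat.mod_lt _ hk)
    have h2 : ((t + i) % k + 1) % k = (t + (i + 1) % k) % k := by
      rw [Nat.mod_add_mod, Nat.add_mod_mod, Nat.add_assoc]
    rwa [h2] at h1

theorem fin_sub_val {k : ℕ} (hk : 2 ≤ k) (a b : Fin k) :
    (b - a).val = 1 ↔ b.val = (a.val + 1) % k := by
  have ha := a.isLt
  have hb := b.isLt
  rw [Fin.sub_def]
  simp only
  have h2 : (a.val + 1) % k = if a.val + 1 = k then 0 else a.val + 1 := by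
    split
    · next h => rw [h, Nat.mod_self]
    · next h => exact Nat.mod_eq_of_lt (by omega)
  have h1 : (k - a.val + b.val) % k =
      if a.val ≤ b.val then b.val - a.val else b.val + k - a.val := by
    split
    · next h =>
      rw [show k - a.val + b.val = (b.val - a.val) + k by omega,
        Nat.add_mod_right, Nat.mod_eq_of_lt (by omega)]
    · next h => rw [Nat.mod_eq_of_lt (by omega)]; omega
  rw [h1, h2]
  split <;> split <;> omega

theorem chord_exists {V : Type*} {G : SimpleGraph V} (hch : Chordal G) {k : ℕ}
    (hk : 4 ≤ k) {f : ℕ → V} (hf : IsCC G k f) :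
    ∃ i j, i + 2 ≤ j ∧ j < k ∧ j + 2 ≤ i + k ∧ G.Adj (f i) (f j) := by
  by_contra hcon
  push_neg at hcon
  obtain ⟨hinj, hadj⟩ := hf
  have hk2 : 2 ≤ k := by omega
  have key : ∀ a b : Fin k, a.val < b.val → G.Adj (f a.val) (f b.val) →
      a.val = (b.val + 1) % k ∨ b.val = (a.val + 1) % k := by
    intro a b hab hadj'
    have ha := a.isLt
    have hb := b.isLt
    by_cases h1 : b.val = a.val + 1
    · right; rw [Nat.mod_eq_of_lt (by omega)]; omega
    · by_cases h2 : a.val = 0 ∧ b.val = k - 1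
      · left; rw [show b.val + 1 = k by omega, Nat.mod_self]; omega
      · exact absurd hadj' (hcon a.val b.val (by omega) hb (by omega))
  refine (hch k hk).false ⟨⟨fun i => f i.val, ?_⟩, ?_⟩
  · intro a b h
    exact Fin.ext (hinj _ a.isLt _ b.isLt h)
  · intro a b
    rw [cycleGraph_adj']
    constructor
    · intro h
      rcases lt_trichotomy a.val b.val with h' | h' | h'
      · rcases key a b h' h with h'' | h''
        · left; rwa [fin_sub_val hk2]
        · right; rwa [fin_sub_val hk2]
      · have : a = b := Fin.ext h'
        subst this
        exact absurd h (G.irrefl)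
      · rcases key b a h' h.symm with h'' | h''
        · right; rwa [fin_sub_val hk2]
        · left; rwa [fin_sub_val hk2]
    · intro h
      rcases h with h | h
      · rw [fin_sub_val hk2] at h
        have := hadj b.val b.isLt
        rw [← h] at this
        exact this.symm
      · rw [fin_sub_val hk2] at h
        have := hadj a.val a.isLt
        rwa [← h] at this

theorem split_left {V : Type*} {G : SimpleGraph V} {k i j : ℕ} {f : ℕ → V}
    (hf : IsCC G k f) (h1 : i + 2 ≤ j) (h2 : j < k)
    (hadj : G.Adj (f i) (f j)) : IsCC G (j - i + 1) (fun m => f (i + m)) := by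
  obtain ⟨hinj, hcadj⟩ := hf
  constructor
  · intro m hm m' hm' h
    have := hinj (i + m) (by omega) (i + m') (by omega) h
    omega
  · intro m hm
    by_cases hlast : m = j - i
    · subst hlast
      rw [Nat.mod_self]
      simp only
      rw [show i + (j - i) = j by omega, show i + 0 = i by omega]
      exact hadj.symm
    · rw [Nat.mod_eq_of_lt (by omega)]
      simp only
      have := hcadj (i + m) (by omega)
      rwa [Nat.mod_eq_of_lt (by omega), show i + m + 1 = i + (m + 1) by omega] at this

theorem split_right {V : Type*} {G : SimpleGraph V} {k i j : ℕ} {f : ℕ → V}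
    (hf : IsCC G k f) (h1 : i + 2 ≤ j) (h2 : j < k) (h3 : j + 2 ≤ i + k)
    (hadj : G.Adj (f i) (f j)) : IsCC G (k - (j - i) + 1) (fun m => f ((j + m) % k)) := by
  obtain ⟨hinj, hcadj⟩ := hf
  have hk : 0 < k := by omega
  constructor
  · intro m hm m' hm' h
    have h4 := hinj ((j + m) % k) (Nat.mod_lt _ hk) ((j + m') % k) (Nat.mod_lt _ hk) h
    have h5 : m ≡ m' [MOD k] := Nat.ModEq.add_left_cancel' j h4
    rwa [Nat.ModEq, Nat.mod_eq_of_lt (by omega), Nat.mod_eq_of_lt (by omega)] at h5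
  · intro m hm
    by_cases hlast : m = k - (j - i)
    · subst hlast
      rw [Nat.mod_self]
      simp only
      rw [show j + (k - (j - i)) = i + k by omega, Nat.add_mod_right,
        Nat.mod_eq_of_lt (by omega), show j + 0 = j by omega,
        Nat.mod_eq_of_lt h2]
      exact hadj
    · rw [Nat.mod_eq_of_lt (by omega)]
      simp only
      have := hcadj ((j + m) % k) (Nat.mod_lt _ hk)
      rwa [Nat.mod_add_mod, show j + m + 1 = j + (m+1) by omega] at this

theorem four_chord {V : Type*} {G : SimpleGraph V} (hch : Chordal G) {a b c d : V}
    (hac : a ≠ c) (hbd : b ≠ d)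
    (e1 : G.Adj a b) (e2 : G.Adj b c) (e3 : G.Adj c d) (e4 : G.Adj d a) :
    G.Adj a c ∨ G.Adj b d := by
  by_contra hcon
  push_neg at hcon
  set f : ℕ → V := fun m => if m = 0 then a else if m = 1 then b else if m = 2 then c else d with hfdef
  have hcc : IsCC G 4 f := by
    constructor
    · intro i hi j hj h
      interval_cases i <;> interval_cases j <;> simp_all [hfdef] <;>
        first
          | rfl
          | exact absurd h (G.ne_of_adj ‹_›)
          | exact absurd h.symm (G.ne_of_adj ‹_›)
          | exact absurd h hac | exact absurd h.symm hac
          | exact absurd h hbd | exact absurd h.symm hbd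
    · intro i hi
      interval_cases i <;> simp [hfdef] <;> assumption
  obtain ⟨i, j, h1, h2, h3, hadj⟩ := chord_exists hch (by norm_num) hcc
  have : (i = 0 ∧ j = 2) ∨ (i = 1 ∧ j = 3) := by omega
  rcases this with ⟨hi, hj⟩ | ⟨hi, hj⟩ <;> subst hi <;> subst hj <;>
    simp [hfdef] at hadj
  · exact hcon.1 hadj
  · exact hcon.2 hadj

theorem sparse_finset {V : Type*} {G : SimpleGraph V} (hs : Sparse G)
    (s : Finset V) (t : Finset (Sym2 V)) (hne : s.Nonempty)
    (hsub : ∀ e ∈ t, e ∈ G.edgeSet) (hv : ∀ e ∈ t, ∀ a ∈ e, a ∈ s) :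
    t.card ≤ 3 * s.card / 2 - 1 := by
  classical
  let H : G.Subgraph :=
    { verts := ↑s
      Adj := fun a b => s(a, b) ∈ t
      adj_sub := fun {a b} h => (G.mem_edgeSet).1 (hsub _ h)
      edge_vert := fun {a b} h => hv _ h a (Sym2.mem_mk_left a b)
      symm := ⟨fun a b h => by show s(b, a) ∈ t; rwa [Sym2.eq_swap]⟩ }
  have h1 := hs H (by exact Finset.coe_nonempty.2 hne)
  have hE : H.edgeSet = ↑t := by
    ext e
    refine e.ind (fun x y => ?_)
    simp [Subgraph.mem_edgeSet, H]
  have hV : H.verts = ↑s := rfl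
  rw [hE, hV, Nat.card_coe_set_eq, Nat.card_coe_set_eq,
    Set.ncard_coe_finset, Set.ncard_coe_finset] at h1
  exact h1

/-- From a cycle `g` of length `n` with distinguished edge set given by index
pairs `P` (all indices `< n`), get a sparse-violating count. -/
theorem sparse_pairs {V : Type*} {G : SimpleGraph V} (hs : Sparse G)
    {n : ℕ} (hn : 0 < n) {g : ℕ → V} (hinj : ∀ i < n, ∀ j < n, g i = g j → i = j)
    (P : Finset (ℕ × ℕ))
    (hPlt : ∀ p ∈ P, p.1 < n ∧ p.2 < n ∧ p.1 ≠ p.2)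
    (hPadj : ∀ p ∈ P, G.Adj (g p.1) (g p.2))
    (hPinj : ∀ p ∈ P, ∀ q ∈ P, (s(p.1, p.2) : Sym2 ℕ) = s(q.1, q.2) → p = q) :
    P.card ≤ 3 * n / 2 - 1 := by
  classical
  have key := sparse_finset hs ((Finset.range n).image g)
      (P.image (fun p => s(g p.1, g p.2))) ?_ ?_ ?_
  · rw [Finset.card_image_of_injOn, Finset.card_image_of_injOn] at key
    · rwa [Finset.card_range] at key
    · intro i hi j hj h
      simp only [Finset.coe_range, Set.mem_Iio] at hi hj
      exact hinj i hi j hj h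
    · intro p hp q hq h
      simp only [Finset.mem_coe] at hp hq
      rw [Sym2.eq_iff] at h
      refine hPinj p hp q hq ?_
      rw [Sym2.eq_iff]
      obtain ⟨h1p, h2p, -⟩ := hPlt p hp
      obtain ⟨h1q, h2q, -⟩ := hPlt q hq
      rcases h with ⟨ha, hb⟩ | ⟨ha, hb⟩
      · exact Or.inl ⟨hinj _ h1p _ h1q ha, hinj _ h2p _ h2q hb⟩
      · exact Or.inr ⟨hinj _ h1p _ h2q ha, hinj _ h2p _ h1q hb⟩
  · exact ⟨g 0, Finset.mem_image.2 ⟨0, Finset.mem_range.2 hn, rfl⟩⟩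
  · intro e he
    obtain ⟨p, hp, rfl⟩ := Finset.mem_image.1 he
    exact (G.mem_edgeSet).2 (hPadj p hp)
  · intro e he a hae
    obtain ⟨p, hp, rfl⟩ := Finset.mem_image.1 he
    obtain ⟨h1, h2, -⟩ := hPlt p hp
    rw [Sym2.mem_iff] at hae
    rcases hae with rfl | rfl
    · exact Finset.mem_image.2 ⟨p.1, Finset.mem_range.2 h1, rfl⟩
    · exact Finset.mem_image.2 ⟨p.2, Finset.mem_range.2 h2, rfl⟩

theorem sp5 {V : Type*} {G : SimpleGraph V} (hch : Chordal G) (hs : Sparse G)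
    {g : ℕ → V} (hcc : IsCC G 5 g) (h02 : G.Adj (g 0) (g 2)) : False := by
  obtain ⟨hinj, hadj⟩ := hcc
  have e01 : G.Adj (g 0) (g 1) := by simpa using hadj 0 (by norm_num)
  have e12 : G.Adj (g 1) (g 2) := by simpa using hadj 1 (by norm_num)
  have e23 : G.Adj (g 2) (g 3) := by simpa using hadj 2 (by norm_num)
  have e34 : G.Adj (g 3) (g 4) := by simpa using hadj 3 (by norm_num)
  have e40 : G.Adj (g 4) (g 0) := by simpa using hadj 4 (by norm_num)
  have hne : ∀ i < 5, ∀ j < 5, i ≠ j → g i ≠ g j :=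
    fun i hi j hj hij h => hij (hinj i hi j hj h)
  -- chord of the 4-cycle g0 g2 g3 g4
  have hD := four_chord hch (hne 0 (by norm_num) 3 (by norm_num) (by norm_num))
    (hne 2 (by norm_num) 4 (by norm_num) (by norm_num)) h02 e23 e34 e40
  have base : ∀ D : ℕ × ℕ, D.1 < 5 → D.2 < 5 → D.1 ≠ D.2 → G.Adj (g D.1) (g D.2) →
      D ∉ ({(0,1),(1,2),(2,3),(3,4),(4,0),(0,2)} : Finset (ℕ × ℕ)) →
      (∀ q ∈ ({(0,1),(1,2),(2,3),(3,4),(4,0),(0,2)} : Finset (ℕ × ℕ)),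
        (s(D.1, D.2) : Sym2 ℕ) ≠ s(q.1, q.2)) → False := by
    intro D hD1 hD2 hD12 hDadj hDmem hDne
    have key := sparse_pairs hs (by norm_num : (0:ℕ) < 5) hinj
      (insert D {(0,1),(1,2),(2,3),(3,4),(4,0),(0,2)}) ?_ ?_ ?_
    · rw [Finset.card_insert_of_notMem hDmem,
        show ({(0,1),(1,2),(2,3),(3,4),(4,0),(0,2)} : Finset (ℕ × ℕ)).card = 6 from by decide]
        at key
      omega
    · intro p hp
      rcases Finset.mem_insert.1 hp with rfl | hp
      · exact ⟨hD1, hD2, hD12⟩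
      · fin_cases hp <;> decide
    · intro p hp
      rcases Finset.mem_insert.1 hp with rfl | hp
      · exact hDadj
      · fin_cases hp
        exacts [e01, e12, e23, e34, e40, h02]
    · intro p hp q hq h
      rcases Finset.mem_insert.1 hp with hpD | hp <;>
        rcases Finset.mem_insert.1 hq with hqD | hq
      · rw [hpD, hqD]
      · rw [hpD] at h; exact absurd h (hDne q hq)
      · rw [hqD] at h; exact absurd h.symm (hDne p hp)
      · fin_cases hp <;> fin_cases hq <;>
          first
            | rfl
            | (exfalso; norm_num [Sym2.eq_iff] at h)
  rcases hD with hD | hD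
  · exact base (0,3) (by norm_num) (by norm_num) (by norm_num) hD (by decide)
      (by intro q hq; fin_cases hq <;> simp [Sym2.eq_iff])
  · exact base (2,4) (by norm_num) (by norm_num) (by norm_num) hD (by decide)
      (by intro q hq; fin_cases hq <;> simp [Sym2.eq_iff])

theorem sp6 {V : Type*} {G : SimpleGraph V} (hch : Chordal G) (hs : Sparse G)
    {g : ℕ → V} (hcc : IsCC G 6 g) (h03 : G.Adj (g 0) (g 3)) : False := by
  obtain ⟨hinj, hadj⟩ := hcc
  have e01 : G.Adj (g 0) (g 1) := by simpa using hadj 0 (by norm_num)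
  have e12 : G.Adj (g 1) (g 2) := by simpa using hadj 1 (by norm_num)
  have e23 : G.Adj (g 2) (g 3) := by simpa using hadj 2 (by norm_num)
  have e34 : G.Adj (g 3) (g 4) := by simpa using hadj 3 (by norm_num)
  have e45 : G.Adj (g 4) (g 5) := by simpa using hadj 4 (by norm_num)
  have e50 : G.Adj (g 5) (g 0) := by simpa using hadj 5 (by norm_num)
  have hne : ∀ i < 6, ∀ j < 6, i ≠ j → g i ≠ g j :=
    fun i hi j hj hij h => hij (hinj i hi j hj h)
  have hD1 := four_chord hch (hne 0 (by norm_num) 2 (by norm_num) (by norm_num))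
    (hne 1 (by norm_num) 3 (by norm_num) (by norm_num)) e01 e12 e23 h03.symm
  have hD2 := four_chord hch (hne 3 (by norm_num) 5 (by norm_num) (by norm_num))
    (hne 4 (by norm_num) 0 (by norm_num) (by norm_num)) e34 e45 e50 h03
  have base : ∀ D1 D2 : ℕ × ℕ,
      D1.1 < 6 → D1.2 < 6 → D1.1 ≠ D1.2 → G.Adj (g D1.1) (g D1.2) →
      D2.1 < 6 → D2.2 < 6 → D2.1 ≠ D2.2 → G.Adj (g D2.1) (g D2.2) →
      D1 ≠ D2 → (s(D1.1, D1.2) : Sym2 ℕ) ≠ s(D2.1, D2.2) →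
      D1 ∉ ({(0,1),(1,2),(2,3),(3,4),(4,5),(5,0),(0,3)} : Finset (ℕ × ℕ)) →
      D2 ∉ ({(0,1),(1,2),(2,3),(3,4),(4,5),(5,0),(0,3)} : Finset (ℕ × ℕ)) →
      (∀ q ∈ ({(0,1),(1,2),(2,3),(3,4),(4,5),(5,0),(0,3)} : Finset (ℕ × ℕ)),
        (s(D1.1, D1.2) : Sym2 ℕ) ≠ s(q.1, q.2)) →
      (∀ q ∈ ({(0,1),(1,2),(2,3),(3,4),(4,5),(5,0),(0,3)} : Finset (ℕ × ℕ)),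
        (s(D2.1, D2.2) : Sym2 ℕ) ≠ s(q.1, q.2)) → False := by
    intro D1 D2 h11 h12 h1ne h1adj h21 h22 h2ne h2adj hDD hDDs hm1 hm2 hne1 hne2
    have key := sparse_pairs hs (by norm_num : (0:ℕ) < 6) hinj
      (insert D1 (insert D2 {(0,1),(1,2),(2,3),(3,4),(4,5),(5,0),(0,3)})) ?_ ?_ ?_
    · rw [Finset.card_insert_of_notMem (by
          simp only [Finset.mem_insert]
          push_neg
          exact ⟨hDD, by simpa using hm1⟩),
        Finset.card_insert_of_notMem hm2,
        show ({(0,1),(1,2),(2,3),(3,4),(4,5),(5,0),(0,3)} : Finset (ℕ × ℕ)).card = 7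
          from by decide] at key
      omega
    · intro p hp
      rcases Finset.mem_insert.1 hp with rfl | hp
      · exact ⟨h11, h12, h1ne⟩
      rcases Finset.mem_insert.1 hp with rfl | hp
      · exact ⟨h21, h22, h2ne⟩
      · fin_cases hp <;> decide
    · intro p hp
      rcases Finset.mem_insert.1 hp with rfl | hp
      · exact h1adj
      rcases Finset.mem_insert.1 hp with rfl | hp
      · exact h2adj
      · fin_cases hp
        exacts [e01, e12, e23, e34, e45, e50, h03]
    · intro p hp q hq h
      rcases Finset.mem_insert.1 hp with hpD | hp <;>
        rcases Finset.mem_insert.1 hq with hqD | hq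
      · rw [hpD, hqD]
      · rw [hpD] at h
        rcases Finset.mem_insert.1 hq with hqD | hq
        · exact absurd (h.trans (by rw [hqD])) hDDs
        · exact absurd h (hne1 q hq)
      · rw [hqD] at h
        rcases Finset.mem_insert.1 hp with hpD | hp
        · exact absurd (h.symm.trans (by rw [hpD])) hDDs
        · exact absurd h.symm (hne1 p hp)
      · rcases Finset.mem_insert.1 hp with hpD | hp <;>
          rcases Finset.mem_insert.1 hq with hqD | hq
        · rw [hpD, hqD]
        · rw [hpD] at h; exact absurd h (hne2 q hq)
        · rw [hqD] at h; exact absurd h.symm (hne2 p hp)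
        · fin_cases hp <;> fin_cases hq <;>
            first
              | rfl
              | (exfalso; norm_num [Sym2.eq_iff] at h)
  rcases hD1 with hD1 | hD1 <;> rcases hD2 with hD2 | hD2
  · exact base (0,2) (3,5) (by norm_num) (by norm_num) (by norm_num) hD1
      (by norm_num) (by norm_num) (by norm_num) hD2 (by decide)
      (by norm_num [Sym2.eq_iff]) (by decide) (by decide)
      (by intro q hq; fin_cases hq <;> norm_num [Sym2.eq_iff])
      (by intro q hq; fin_cases hq <;> norm_num [Sym2.eq_iff])
  · exact base (0,2) (4,0) (by norm_num) (by norm_num) (by norm_num) hD1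
      (by norm_num) (by norm_num) (by norm_num) hD2 (by decide)
      (by norm_num [Sym2.eq_iff]) (by decide) (by decide)
      (by intro q hq; fin_cases hq <;> norm_num [Sym2.eq_iff])
      (by intro q hq; fin_cases hq <;> norm_num [Sym2.eq_iff])
  · exact base (1,3) (3,5) (by norm_num) (by norm_num) (by norm_num) hD1
      (by norm_num) (by norm_num) (by norm_num) hD2 (by decide)
      (by norm_num [Sym2.eq_iff]) (by decide) (by decide)
      (by intro q hq; fin_cases hq <;> norm_num [Sym2.eq_iff])
      (by intro q hq; fin_cases hq <;> norm_num [Sym2.eq_iff])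
  · exact base (1,3) (4,0) (by norm_num) (by norm_num) (by norm_num) hD1
      (by norm_num) (by norm_num) (by norm_num) hD2 (by decide)
      (by norm_num [Sym2.eq_iff]) (by decide) (by decide)
      (by intro q hq; fin_cases hq <;> norm_num [Sym2.eq_iff])
      (by intro q hq; fin_cases hq <;> norm_num [Sym2.eq_iff])

theorem no_big {V : Type*} {G : SimpleGraph V} (hch : Chordal G) (hs : Sparse G) :
    ∀ k, 5 ≤ k → ∀ f : ℕ → V, ¬ IsCC G k f := by
  intro k
  induction k using Nat.strong_induction_on with
  | _ k IH =>
  intro hk f hf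
  obtain ⟨i, j, h1, h2, h3, hadj⟩ := chord_exists hch (by omega) hf
  have p1 := split_left hf h1 h2 hadj
  have p2 := split_right hf h1 h2 h3 hadj
  have ha : j - i + 1 ≤ 4 := by
    by_contra hcon
    exact IH (j - i + 1) (by omega) (by omega) _ p1
  have hb : k - (j - i) + 1 ≤ 4 := by
    by_contra hcon
    exact IH (k - (j - i) + 1) (by omega) (by omega) _ p2
  have hk56 : k = 5 ∨ k = 6 := by omega
  rcases hk56 with rfl | rfl
  · -- length 5, chord at distance 2 or 3
    rcases (show j - i = 2 ∨ j - i = 3 by omega) with hd | hd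
    · refine sp5 hch hs (hf.rot i) ?_
      show G.Adj (f ((i + 0) % 5)) (f ((i + 2) % 5))
      rw [Nat.mod_eq_of_lt (by omega), Nat.mod_eq_of_lt (by omega),
        Nat.add_zero, show i + 2 = j by omega]
      exact hadj
    · refine sp5 hch hs (hf.rot j) ?_
      show G.Adj (f ((j + 0) % 5)) (f ((j + 2) % 5))
      rw [Nat.add_zero, Nat.mod_eq_of_lt (by omega),
        show j + 2 = i + 5 by omega, Nat.add_mod_right,
        Nat.mod_eq_of_lt (by omega)]
      exact hadj.symm
  · -- length 6, chord at distance 3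
    have hd : j - i = 3 := by omega
    refine sp6 hch hs (hf.rot i) ?_
    show G.Adj (f ((i + 0) % 6)) (f ((i + 3) % 6))
    rw [Nat.mod_eq_of_lt (by omega), Nat.mod_eq_of_lt (by omega),
      Nat.add_zero, show i + 3 = j by omega]
    exact hadj

theorem support_getElem {V : Type*} {G : SimpleGraph V} :
    ∀ {u v : V} (p : G.Walk u v) (i : ℕ) (h : i < p.support.length),
      p.support[i] = p.getVert i := by
  intro u v p
  induction p with
  | nil => intro i h; simp at h; subst h; simp [Walk.getVert_zero]
  | cons hadj q ih =>
    intro i h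
    cases i with
    | zero => simp [Walk.getVert_zero]
    | succ m =>
      exact ih m (Nat.lt_of_succ_lt_succ h)

theorem walk_to_cc {V : Type*} {G : SimpleGraph V} {v : V} {c : G.Walk v v}
    (hc : c.IsCycle) : IsCC G c.length c.getVert := by
  have hlen := c.length_support
  set n := c.length with hn
  have h3 : 3 ≤ n := hc.three_le_length
  have htl : c.support.tail.length = n := by rw [List.length_tail, hlen]; omega
  have htail := hc.support_nodup
  have hv : c.getVert n = v := c.getVert_length
  have key : ∀ m (hm : m < n), c.support.tail[m]'(by omega) = c.getVert (m + 1) := by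
    intro m hm
    rw [List.getElem_tail]
    exact support_getElem c (m + 1) (by omega)
  have main : ∀ i j, 1 ≤ i → i ≤ n → 1 ≤ j → j ≤ n →
      c.getVert i = c.getVert j → i = j := by
    intro i j hi1 hi2 hj1 hj2 h
    have hb1 : i - 1 < c.support.tail.length := by omega
    have hb2 : j - 1 < c.support.tail.length := by omega
    have heq : c.support.tail[i-1]'hb1 = c.support.tail[j-1]'hb2 := by
      rw [key (i-1) (by omega), key (j-1) (by omega),
        show i - 1 + 1 = i by omega, show j - 1 + 1 = j by omega]
      exact h
    have := htail.getElem_inj_iff.1 heq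
    omega
  constructor
  · intro i hi j hj h
    rcases Nat.eq_zero_or_pos i with rfl | hi0
    · rcases Nat.eq_zero_or_pos j with rfl | hj0
      · rfl
      · rw [Walk.getVert_zero] at h
        have := main n j (by omega) le_rfl hj0 (by omega) (hv.trans h)
        omega
    · rcases Nat.eq_zero_or_pos j with rfl | hj0
      · rw [Walk.getVert_zero] at h
        have := main i n hi0 (by omega) (by omega) le_rfl (h.trans hv.symm)
        omega
      · exact main i j hi0 (by omega) hj0 (by omega) h
  · intro i hi
    by_cases hlast : i + 1 = n
    · rw [hlast, Nat.mod_self]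
      have h := c.adj_getVert_succ (by omega : i < c.length)
      rw [hlast, hv] at h
      rwa [Walk.getVert_zero]
    · rw [Nat.mod_eq_of_lt (by omega)]
      exact c.adj_getVert_succ (by omega)


theorem stmt15 {V : Type*} (G : SimpleGraph V) (hch : Chordal G)
    (hs : Sparse G) :
    ∀ (v : V) (c : G.Walk v v), c.IsCycle → c.length = 3 ∨ c.length = 4 := by
  intro v c hc
  by_contra hcon
  push_neg at hcon
  have h3 := hc.three_le_length
  exact no_big hch hs c.length (by omega) c.getVert (walk_to_cc hc)
end

section
/- Let G be a connected split graph. Then G is matching-decyclable if and only if G is a star, a double star, a triangle with pendant vertices, or a diamond with pendant vertices all attached to a same triangle. -/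
open SimpleGraph

/-- A split graph: the vertex set partitions into a clique and an independent set. -/
def SplitGraph {V : Type*} (G : SimpleGraph V) : Prop :=
  ∃ K I : Set V, (∀ v : V, v ∈ K ∨ v ∈ I) ∧ Disjoint K I ∧
    G.IsClique K ∧ ∀ u ∈ I, ∀ v ∈ I, ¬ G.Adj u v

/-- `G` is a star `K_{1,p}` with center `c`. -/
def IsStar {V : Type*} (G : SimpleGraph V) : Prop :=
  ∃ c : V, (∀ v : V, v ≠ c → G.Adj c v) ∧ ∀ u v : V, G.Adj u v → u = c ∨ v = c

/-- `G` is a double star: two stars together with an edge joining their centers. -/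
def IsDoubleStar {V : Type*} (G : SimpleGraph V) : Prop :=
  ∃ c₁ c₂ : V, c₁ ≠ c₂ ∧ G.Adj c₁ c₂ ∧
    ∀ v : V, v ≠ c₁ → v ≠ c₂ →
      (G.Adj c₁ v ∨ G.Adj c₂ v) ∧ ¬ (G.Adj c₁ v ∧ G.Adj c₂ v) ∧
      ∀ w : V, G.Adj v w → w = c₁ ∨ w = c₂

/-- `G` is a triangle with pendant vertices. -/
def IsTriangleWithPendants {V : Type*} (G : SimpleGraph V) : Prop :=
  ∃ a b c : V, a ≠ b ∧ a ≠ c ∧ b ≠ c ∧ G.Adj a b ∧ G.Adj a c ∧ G.Adj b c ∧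
    ∀ v : V, v ≠ a → v ≠ b → v ≠ c →
      ∃! w : V, G.Adj v w ∧ (w = a ∨ w = b ∨ w = c) ∧ ∀ u : V, G.Adj v u → u = w

/-- `G` is a diamond with pendant vertices all attached to a same triangle. -/
def IsDiamondWithPendants {V : Type*} (G : SimpleGraph V) : Prop :=
  ∃ a b c d : V, ([a, b, c, d] : List V).Nodup ∧
    G.Adj a b ∧ G.Adj a c ∧ G.Adj a d ∧ G.Adj b c ∧ G.Adj c d ∧ ¬ G.Adj b d ∧
    ∀ v : V, v ≠ a → v ≠ b → v ≠ c → v ≠ d →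
      ∃! w : V, G.Adj v w ∧ (w = a ∨ w = b ∨ w = c) ∧ ∀ u : V, G.Adj v u → u = w


section Aux

open Walk

variable {V : Type*} {G : SimpleGraph V} {M : Set (Sym2 V)}

private lemma cycle_reverse {v : V} {p : G.Walk v v} (h : p.IsCycle) : p.reverse.IsCycle := by
  rw [Walk.isCycle_def] at h ⊢
  obtain ⟨ht, hn, hd⟩ := h
  refine ⟨ht.reverse _, ?_, ?_⟩
  · intro hr
    apply hn
    have := congrArg Walk.reverse hr
    simpa using this
  · rw [Walk.support_reverse, List.tail_reverse]
    rw [List.nodup_reverse]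
    have hne : p.support ≠ [] := p.support_ne_nil
    have hlast : p.support.getLast hne = v := p.getLast_support
    rcases p with _ | ⟨ha, q⟩
    · simp
    · rename_i w
      simp only [Walk.support_cons] at *
      have hq : q.support ≠ [] := q.support_ne_nil
      have h1 : (v :: q.support).dropLast = v :: q.support.dropLast := by
        rw [List.dropLast_cons_of_ne_nil hq]
      rw [h1]
      have hd' : q.support.Nodup := by simpa using hd
      have hql : q.support.getLast hq = v := q.getLast_support
      have : q.support.dropLast ++ [v] = q.support := by
        conv_rhs => rw [← List.dropLast_append_getLast hq]
        rw [hql]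
      rw [List.nodup_cons]
      refine ⟨?_, hd'.sublist (List.dropLast_sublist _)⟩
      intro hv
      have h2 := this ▸ hd'
      rw [List.nodup_append] at h2
      exact h2.2.2 v hv v (by simp) rfl

private lemma acyclic_of_pendants (G' : SimpleGraph V) (a b c : V)
    (hpend : ∀ x, x ≠ a → x ≠ b → x ≠ c → ∀ u w, G'.Adj x u → G'.Adj x w → u = w)
    (hnab : ¬ G'.Adj a b) : G'.IsAcyclic := by
  classical
  intro v p hp
  have key : ∀ y ∈ p.support, y = a ∨ y = b ∨ y = c := by
    intro y hy
    by_contra hny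
    push_neg at hny
    obtain ⟨hya, hyb, hyc⟩ := hny
    have hq : (p.rotate y hy).IsCycle := hp.rotate hy
    revert hq
    generalize p.rotate y hy = q
    intro hq
    have hq3 : 3 ≤ q.length := hq.three_le_length
    cases q with
    | nil => exact hq.not_of_nil
    | cons h1 t =>
      rename_i u
      obtain ⟨w, h2, t', hr⟩ : ∃ (w : V) (h2 : G'.Adj y w) (t' : G'.Walk w y),
          (Walk.cons h1 t).reverse = Walk.cons h2 t' := by
        cases hrv : (Walk.cons h1 t).reverse with
        | nil => exact absurd hrv (cycle_reverse hq).ne_nil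
        | cons h2 t' => exact ⟨_, h2, t', rfl⟩
      have huw : u = w := hpend y hya hyb hyc u w h1 h2
      subst huw
      have hrev : (Walk.cons h1 t).edges.reverse = s(y,u) :: t'.edges := by
        rw [← Walk.edges_reverse, hr, Walk.edges_cons]
      have hqe : (Walk.cons h1 t).edges = t'.edges.reverse ++ [s(y,u)] := by
        have := congrArg List.reverse hrev
        simpa [List.reverse_cons] using this
      have htne : t.edges ≠ [] := by
        intro hnil
        have hl : t.edges.length = t.length := Walk.length_edges t
        rw [hnil] at hl
        simp only [Walk.length_cons] at hq3
        simp at hl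
        omega
      have hceq : s(y,u) :: t.edges = t'.edges.reverse ++ [s(y,u)] := by
        rw [← Walk.edges_cons h1, hqe]
      have hmem : s(y,u) ∈ t.edges := by
        cases htr : t'.edges.reverse with
        | nil =>
          rw [htr] at hceq
          simp only [List.nil_append, List.cons.injEq] at hceq
          exact absurd hceq.2 htne
        | cons B l'' =>
          rw [htr, List.cons_append] at hceq
          have : t.edges = l'' ++ [s(y,u)] := by
            have := hceq
            simp only [List.cons.injEq] at this
            exact this.2
          rw [this]
          simp
      have hnodup : ((Walk.cons h1 t).edges).Nodup := hq.isCircuit.isTrail.edges_nodup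
      rw [Walk.edges_cons, List.nodup_cons] at hnodup
      exact hnodup.1 hmem
  have hp3 : 3 ≤ p.length := hp.three_le_length
  cases p with
  | nil => exact hp.not_of_nil
  | cons h1 r =>
    rename_i x₁
    cases r with
    | nil => simp at hp3
    | cons h2 s =>
      rename_i x₂
      cases s with
      | nil => simp at hp3
      | cons h3 q' =>
        rename_i x₃
        have hnd := hp.2
        simp only [Walk.support_cons, List.tail_cons, List.nodup_cons] at hnd
        obtain ⟨hn1, hn2, _⟩ := hnd
        have hvq : v ∈ q'.support := q'.end_mem_support
        have hx3q : x₃ ∈ q'.support := q'.start_mem_support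
        have h12 : x₁ ≠ x₂ := fun h => hn1 (by simp [h])
        have h13 : x₁ ≠ x₃ := fun h => hn1 (by simp [h, hx3q])
        have h1v : x₁ ≠ v := fun h => hn1 (by simp [h, hvq])
        have h23 : x₂ ≠ x₃ := fun h => hn2 (h ▸ hx3q)
        have h2v : x₂ ≠ v := fun h => hn2 (h ▸ hvq)
        have kv := key v (by simp)
        have k1 := key x₁ (by simp)
        have k2 := key x₂ (by simp)
        have k3 := key x₃ (by simp [Walk.support_cons, hx3q])
        have hx3v : x₃ = v := by
          rcases kv with rfl|rfl|rfl <;> rcases k1 with rfl|rfl|rfl <;>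
            rcases k2 with rfl|rfl|rfl <;> rcases k3 with rfl|rfl|rfl <;> simp_all
        subst hx3v
        rcases kv with rfl|rfl|rfl <;> rcases k1 with rfl|rfl|rfl <;>
          rcases k2 with rfl|rfl|rfl <;>
          first
            | exact hnab h1 | exact hnab h2 | exact hnab h3
            | exact hnab h1.symm | exact hnab h2.symm | exact hnab h3.symm
            | simp_all

private lemma notAcyclic_triangle {G' : SimpleGraph V} {a b c : V}
    (hab : G'.Adj a b) (hbc : G'.Adj b c) (hca : G'.Adj c a) : ¬ G'.IsAcyclic := by
  intro hA
  refine hA (Walk.cons hab (Walk.cons hbc (Walk.cons hca Walk.nil))) ?_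
  have h1 : a ≠ b := hab.ne
  have h2 : b ≠ c := hbc.ne
  have h3 : c ≠ a := hca.ne
  rw [Walk.isCycle_def]
  refine ⟨?_, by simp, ?_⟩
  · rw [Walk.isTrail_def]
    simp [Sym2.eq_iff]
    tauto
  · simp
    tauto

private lemma notAcyclic_quad {G' : SimpleGraph V} {a b c d : V} (hac : a ≠ c) (hbd : b ≠ d)
    (hab : G'.Adj a b) (hbc : G'.Adj b c) (hcd : G'.Adj c d) (hda : G'.Adj d a) :
    ¬ G'.IsAcyclic := by
  intro hA
  refine hA (Walk.cons hab (Walk.cons hbc (Walk.cons hcd (Walk.cons hda Walk.nil)))) ?_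
  have h1 : a ≠ b := hab.ne
  have h2 : b ≠ c := hbc.ne
  have h3 : c ≠ d := hcd.ne
  have h4 : d ≠ a := hda.ne
  rw [Walk.isCycle_def]
  refine ⟨?_, by simp, ?_⟩
  · rw [Walk.isTrail_def]
    simp [Sym2.eq_iff]
    tauto
  · simp
    tauto

private lemma keep' (hM : IsMatchingIn G M) {x y u v : V} (h : s(x,y) ∈ M)
    (h1 : u = x ∨ u = y ∨ v = x ∨ v = y)
    (h2 : ¬ (u = x ∧ v = y)) (h3 : ¬ (u = y ∧ v = x)) : s(u,v) ∉ M := by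
  have hne : s(u,v) ≠ s(x,y) := by rw [Ne, Sym2.eq_iff]; tauto
  intro hf
  have hm : u ∈ s(x,y) ∨ v ∈ s(x,y) := by
    rcases h1 with rfl|rfl|rfl|rfl
    · left; simp
    · left; simp [Sym2.mem_iff]
    · right; simp
    · right; simp [Sym2.mem_iff]
  rcases hm with hmm | hmm
  · exact hM.2 _ h _ hf hne.symm u hmm (by simp)
  · exact hM.2 _ h _ hf hne.symm v hmm (by simp)

private lemma notMem_swap {x y : V} (h : s(x,y) ∉ M) : s(y,x) ∉ M := by rwa [Sym2.eq_swap]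

private lemma adjDel {p q : V} (h : G.Adj p q) (hm : s(p,q) ∉ M) :
    (G.deleteEdges M).Adj p q := by
  rw [deleteEdges_adj]; exact ⟨h, hm⟩

private lemma refute_K4 (hM : IsMatchingIn G M) (hA : (G.deleteEdges M).IsAcyclic)
    {p q r s : V} (hpq : p≠q) (hpr : p≠r) (hps : p≠s) (hqr : q≠r) (hqs : q≠s) (hrs : r≠s)
    (apq : G.Adj p q) (apr : G.Adj p r) (aps : G.Adj p s) (aqr : G.Adj q r)
    (aqs : G.Adj q s) (ars : G.Adj r s) : False := by
  by_cases h1 : s(p,q) ∈ M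
  · by_cases h2 : s(r,s) ∈ M
    · exact notAcyclic_quad hpq hrs
        (adjDel apr (keep' hM h1 (by tauto) (by tauto) (by tauto)))
        (adjDel aqr.symm (keep' hM h1 (by tauto) (by tauto) (by tauto)))
        (adjDel aqs (keep' hM h1 (by tauto) (by tauto) (by tauto)))
        (adjDel aps.symm (keep' hM h1 (by tauto) (by tauto) (by tauto))) hA
    · exact notAcyclic_triangle
        (adjDel aqr (keep' hM h1 (by tauto) (by tauto) (by tauto)))
        (adjDel ars h2)
        (adjDel aqs.symm (keep' hM h1 (by tauto) (by tauto) (by tauto))) hA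
  · by_cases h3 : s(p,r) ∈ M
    · by_cases h4 : s(q,s) ∈ M
      · exact notAcyclic_quad hpr hqs
          (adjDel apq h1)
          (adjDel aqr (keep' hM h4 (by tauto) (by tauto) (by tauto)))
          (adjDel ars (keep' hM h3 (by tauto) (by tauto) (by tauto)))
          (adjDel aps.symm (keep' hM h3 (by tauto) (by tauto) (by tauto))) hA
      · exact notAcyclic_triangle
          (adjDel apq h1)
          (adjDel aqs h4)
          (adjDel aps.symm (keep' hM h3 (by tauto) (by tauto) (by tauto))) hA
    · by_cases h6 : s(q,r) ∈ M
      · by_cases h5 : s(p,s) ∈ M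
        · exact notAcyclic_quad hps hqr
            (adjDel apq h1)
            (adjDel aqs (keep' hM h6 (by tauto) (by tauto) (by tauto)))
            (adjDel ars.symm (keep' hM h5 (by tauto) (by tauto) (by tauto)))
            (adjDel apr.symm (notMem_swap h3)) hA
        · exact notAcyclic_triangle
            (adjDel apq h1)
            (adjDel aqs (keep' hM h6 (by tauto) (by tauto) (by tauto)))
            (adjDel aps.symm (notMem_swap h5)) hA
      · exact notAcyclic_triangle
          (adjDel apq h1)
          (adjDel aqr h6)
          (adjDel apr.symm (notMem_swap h3)) hA

private lemma refute_2same (hM : IsMatchingIn G M) (hA : (G.deleteEdges M).IsAcyclic)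
    {x y z v w : V} (hxy : x≠y) (hxz : x≠z) (hyz : y≠z)
    (hvx : v≠x) (hvy : v≠y) (hvz : v≠z) (hwx : w≠x) (hwy : w≠y) (hwz : w≠z) (hvw : v≠w)
    (axy : G.Adj x y) (axz : G.Adj x z) (ayz : G.Adj y z)
    (avx : G.Adj v x) (avy : G.Adj v y) (awx : G.Adj w x) (awy : G.Adj w y) : False := by
  by_cases h1 : s(x,y) ∈ M
  · exact notAcyclic_quad hxy hvw
      (adjDel avx.symm (keep' hM h1 (by tauto) (by tauto) (by tauto)))
      (adjDel avy (keep' hM h1 (by tauto) (by tauto) (by tauto)))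
      (adjDel awy.symm (keep' hM h1 (by tauto) (by tauto) (by tauto)))
      (adjDel awx (keep' hM h1 (by tauto) (by tauto) (by tauto))) hA
  · by_cases h2 : s(x,z) ∈ M
    · by_cases h3 : s(y,v) ∈ M
      · exact notAcyclic_triangle
          (adjDel awx.symm (keep' hM h2 (by tauto) (by tauto) (by tauto)))
          (adjDel awy (keep' hM h3 (by tauto) (by tauto) (by tauto)))
          (adjDel axy.symm (notMem_swap h1)) hA
      · exact notAcyclic_triangle
          (adjDel avx.symm (keep' hM h2 (by tauto) (by tauto) (by tauto)))
          (adjDel avy (notMem_swap h3))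
          (adjDel axy.symm (notMem_swap h1)) hA
    · by_cases h4 : s(y,z) ∈ M
      · by_cases h5 : s(x,v) ∈ M
        · exact notAcyclic_triangle
            (adjDel awx.symm (keep' hM h5 (by tauto) (by tauto) (by tauto)))
            (adjDel awy (keep' hM h4 (by tauto) (by tauto) (by tauto)))
            (adjDel axy.symm (notMem_swap h1)) hA
        · exact notAcyclic_triangle
            (adjDel avx.symm h5)
            (adjDel avy (keep' hM h4 (by tauto) (by tauto) (by tauto)))
            (adjDel axy.symm (notMem_swap h1)) hA
      · exact notAcyclic_triangle
          (adjDel axy h1) (adjDel ayz h4) (adjDel axz.symm (notMem_swap h2)) hA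

private lemma refute_2overlap (hM : IsMatchingIn G M) (hA : (G.deleteEdges M).IsAcyclic)
    {x y z v w : V} (hxy : x≠y) (hxz : x≠z) (hyz : y≠z)
    (hvx : v≠x) (hvy : v≠y) (hvz : v≠z) (hwx : w≠x) (hwy : w≠y) (hwz : w≠z) (hvw : v≠w)
    (axy : G.Adj x y) (axz : G.Adj x z) (ayz : G.Adj y z)
    (avx : G.Adj v x) (avy : G.Adj v y) (awx : G.Adj w x) (awz : G.Adj w z) : False := by
  by_cases h1 : s(x,y) ∈ M
  · exact notAcyclic_quad hxy hvz
      (adjDel avx.symm (keep' hM h1 (by tauto) (by tauto) (by tauto)))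
      (adjDel avy (keep' hM h1 (by tauto) (by tauto) (by tauto)))
      (adjDel ayz (keep' hM h1 (by tauto) (by tauto) (by tauto)))
      (adjDel axz.symm (keep' hM h1 (by tauto) (by tauto) (by tauto))) hA
  · by_cases h2 : s(x,z) ∈ M
    · by_cases h3 : s(v,y) ∈ M
      · exact notAcyclic_quad hxz hwy
          (adjDel awx.symm (keep' hM h2 (by tauto) (by tauto) (by tauto)))
          (adjDel awz (keep' hM h2 (by tauto) (by tauto) (by tauto)))
          (adjDel ayz.symm (keep' hM h2 (by tauto) (by tauto) (by tauto)))
          (adjDel axy.symm (notMem_swap h1)) hA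
      · exact notAcyclic_triangle
          (adjDel avx.symm (keep' hM h2 (by tauto) (by tauto) (by tauto)))
          (adjDel avy h3)
          (adjDel axy.symm (notMem_swap h1)) hA
    · by_cases h4 : s(y,z) ∈ M
      · by_cases h5 : s(x,v) ∈ M
        · exact notAcyclic_triangle
            (adjDel awx.symm (keep' hM h5 (by tauto) (by tauto) (by tauto)))
            (adjDel awz (keep' hM h4 (by tauto) (by tauto) (by tauto)))
            (adjDel axz.symm (notMem_swap h2)) hA
        · exact notAcyclic_triangle
            (adjDel avx.symm h5)
            (adjDel avy (keep' hM h4 (by tauto) (by tauto) (by tauto)))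
            (adjDel axy.symm (notMem_swap h1)) hA
      · exact notAcyclic_triangle
          (adjDel axy h1) (adjDel ayz h4) (adjDel axz.symm (notMem_swap h2)) hA

private lemma refute_3common (hM : IsMatchingIn G M) (hA : (G.deleteEdges M).IsAcyclic)
    {x y u v w : V} (hxy : x≠y)
    (hux : u≠x) (huy : u≠y) (hvx : v≠x) (hvy : v≠y) (hwx : w≠x) (hwy : w≠y)
    (huv : u≠v) (huw : u≠w) (hvw : v≠w)
    (axy : G.Adj x y) (axu : G.Adj x u) (ayu : G.Adj y u)
    (axv : G.Adj x v) (ayv : G.Adj y v) (axw : G.Adj x w) (ayw : G.Adj y w) : False := by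
  by_cases h1 : s(x,y) ∈ M
  · exact notAcyclic_quad hxy huv
      (adjDel axu (keep' hM h1 (by tauto) (by tauto) (by tauto)))
      (adjDel ayu.symm (keep' hM h1 (by tauto) (by tauto) (by tauto)))
      (adjDel ayv (keep' hM h1 (by tauto) (by tauto) (by tauto)))
      (adjDel axv.symm (keep' hM h1 (by tauto) (by tauto) (by tauto))) hA
  · by_cases h2 : s(x,u) ∈ M
    · by_cases h3 : s(y,v) ∈ M
      · exact notAcyclic_triangle
          (adjDel axw (keep' hM h2 (by tauto) (by tauto) (by tauto)))
          (adjDel ayw.symm (keep' hM h3 (by tauto) (by tauto) (by tauto)))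
          (adjDel axy.symm (notMem_swap h1)) hA
      · exact notAcyclic_triangle
          (adjDel axv (keep' hM h2 (by tauto) (by tauto) (by tauto)))
          (adjDel ayv.symm (notMem_swap h3))
          (adjDel axy.symm (notMem_swap h1)) hA
    · by_cases h4 : s(y,u) ∈ M
      · by_cases h5 : s(x,v) ∈ M
        · exact notAcyclic_triangle
            (adjDel axw (keep' hM h5 (by tauto) (by tauto) (by tauto)))
            (adjDel ayw.symm (keep' hM h4 (by tauto) (by tauto) (by tauto)))
            (adjDel axy.symm (notMem_swap h1)) hA
        · exact notAcyclic_triangle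
            (adjDel axv h5)
            (adjDel ayv.symm (keep' hM h4 (by tauto) (by tauto) (by tauto)))
            (adjDel axy.symm (notMem_swap h1)) hA
      · exact notAcyclic_triangle
          (adjDel axu h2) (adjDel ayu.symm (notMem_swap h4))
          (adjDel axy.symm (notMem_swap h1)) hA

private lemma exists_nbr (hcon : G.Connected) {v w : V} (h : v ≠ w) : ∃ u, G.Adj v u := by
  obtain ⟨p⟩ := hcon.preconnected v w
  cases p with
  | nil => exact absurd rfl h
  | cons h' _ => exact ⟨_, h'⟩

private lemma star_dec (h : IsStar G) : MDecyclable G := by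
  obtain ⟨c, hcadj, hedge⟩ := h
  refine ⟨∅, ⟨by simp, by simp⟩, ?_⟩
  rw [deleteEdges_empty]
  refine acyclic_of_pendants G c c c ?_ (G.loopless.irrefl c)
  intro x hx _ _ u w hu hw
  have h1 : u = c := ((hedge x u hu).resolve_left hx)
  have h2 : w = c := ((hedge x w hw).resolve_left hx)
  rw [h1, h2]

private lemma dstar_dec (h : IsDoubleStar G) : MDecyclable G := by
  obtain ⟨c₁, c₂, hne, hadj, hspec⟩ := h
  refine ⟨∅, ⟨by simp, by simp⟩, ?_⟩
  rw [deleteEdges_empty]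
  refine acyclic_of_pendants G c₂ c₂ c₁ ?_ (G.loopless.irrefl c₂)
  intro x hx2 _ hx1 u w hu hw
  obtain ⟨_, hnboth, hall⟩ := hspec x hx1 hx2
  have h1 := hall u hu
  have h2 := hall w hw
  rcases h1 with rfl | rfl <;> rcases h2 with rfl | rfl
  · rfl
  · exact absurd ⟨hu.symm, hw.symm⟩ hnboth
  · exact absurd ⟨hw.symm, hu.symm⟩ hnboth
  · rfl

private lemma tri_dec (h : IsTriangleWithPendants G) : MDecyclable G := by
  obtain ⟨a, b, c, hab, hac, hbc, aab, aac, abc, hpend⟩ := h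
  refine ⟨{s(a,b)}, ⟨by simp [G.mem_edgeSet, aab], ?_⟩, ?_⟩
  · intro e he f hf hef
    simp only [Set.mem_singleton_iff] at he hf
    exact absurd (he.trans hf.symm) hef
  · refine acyclic_of_pendants _ a b c ?_ ?_
    · intro x hx1 hx2 hx3 u w hu hw
      obtain ⟨w₀, ⟨_, _, hall⟩, _⟩ := hpend x hx1 hx2 hx3
      rw [hall u (deleteEdges_adj.mp hu).1, hall w (deleteEdges_adj.mp hw).1]
    · intro hadj
      exact (deleteEdges_adj.mp hadj).2 rfl

private lemma dia_dec (h : IsDiamondWithPendants G) : MDecyclable G := by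
  obtain ⟨a, b, c, d, hnd, aab, aac, aad, abc, acd, hnbd, hpend⟩ := h
  simp only [List.nodup_cons, List.mem_cons, List.mem_singleton, List.not_mem_nil,
    or_false, not_or, List.nodup_nil, and_true] at hnd
  obtain ⟨⟨hab, hac, had⟩, ⟨hbc, hbd⟩, hcd⟩ := hnd
  refine ⟨{s(a,b), s(c,d)}, ⟨?_, ?_⟩, ?_⟩
  · intro e he
    simp only [Set.mem_insert_iff, Set.mem_singleton_iff] at he
    rcases he with rfl | rfl
    · exact G.mem_edgeSet.mpr aab
    · exact G.mem_edgeSet.mpr acd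
  · intro e he f hf hef v hv hvf
    simp only [Set.mem_insert_iff, Set.mem_singleton_iff] at he hf
    rcases he with rfl | rfl <;> rcases hf with rfl | rfl
    · exact hef rfl
    · simp only [Sym2.mem_iff] at hv hvf
      rcases hv with rfl | rfl <;> rcases hvf with h | h <;> simp_all
    · simp only [Sym2.mem_iff] at hv hvf
      rcases hv with rfl | rfl <;> rcases hvf with h | h <;> simp_all
    · exact hef rfl
  · refine acyclic_of_pendants _ a b c ?_ ?_
    · intro x hx1 hx2 hx3 u w hu hw
      by_cases hxd : x = d
      · have key : ∀ t, (G.deleteEdges {s(a,b), s(c,d)}).Adj x t → t = a := by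
          intro t ht
          obtain ⟨hadj, hmem⟩ := deleteEdges_adj.mp ht
          by_cases hta : t = a
          · exact hta
          by_cases htb : t = b
          · subst htb
            exact absurd (hxd ▸ hadj).symm hnbd
          by_cases htc : t = c
          · subst htc
            refine absurd ?_ hmem
            rw [hxd, Sym2.eq_swap]
            simp
          by_cases htd : t = d
          · rw [htd, hxd] at hadj
            exact absurd hadj (G.loopless.irrefl d)
          · obtain ⟨w₀, ⟨_, hw₀mem, hall⟩, _⟩ := hpend t hta htb htc htd
            have hdw := hall x hadj.symm
            rcases hw₀mem with h|h|h
            · exact absurd (hdw.trans h) hx1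
            · exact absurd (hdw.trans h) hx2
            · exact absurd (hdw.trans h) hx3
        rw [key u hu, key w hw]
      · obtain ⟨w₀, ⟨_, _, hall⟩, _⟩ := hpend x hx1 hx2 hx3 hxd
        rw [hall u (deleteEdges_adj.mp hu).1, hall w (deleteEdges_adj.mp hw).1]
    · intro hadj
      exact (deleteEdges_adj.mp hadj).2 (by simp)

private lemma build_diamond (hM : IsMatchingIn G M) (hA : (G.deleteEdges M).IsAcyclic)
    (hcon : G.Connected) {x y z v : V}
    (hxy : x≠y) (hxz : x≠z) (hyz : y≠z) (hvx : v≠x) (hvy : v≠y) (hvz : v≠z)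
    (axy : G.Adj x y) (axz : G.Adj x z) (ayz : G.Adj y z)
    (avx : G.Adj v x) (avy : G.Adj v y)
    (hout : ∀ u, u≠x → u≠y → u≠z → ∀ t, G.Adj u t → t = x ∨ t = y ∨ t = z)
    (hnall : ∀ u, u≠x → u≠y → u≠z → ¬(G.Adj u x ∧ G.Adj u y ∧ G.Adj u z)) :
    IsDiamondWithPendants G := by
  have hnvz : ¬ G.Adj v z := fun h => hnall v hvx hvy hvz ⟨avx, avy, h⟩
  refine ⟨x, z, y, v, ?_, axz, axy, avx.symm, ayz.symm, avy.symm,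
      fun h => hnvz h.symm, ?_⟩
  · simp [hxz, hxy, hvx.symm, hyz.symm, hvz.symm, hvy.symm]
  · intro u hux huz huy huv
    obtain ⟨t, hadj⟩ := exists_nbr hcon hux
    have hone : ∀ t', G.Adj u t' → t' = t := by
      intro t' hadj'
      by_contra hne
      have m1 := hout u hux huy huz t hadj
      have m2 := hout u hux huy huz t' hadj'
      rcases m1 with rfl|rfl|rfl <;> rcases m2 with rfl|rfl|rfl
      · exact hne rfl
      · exact refute_2same hM hA hxy hxz hyz hvx hvy hvz hux huy huz huv.symm
          axy axz ayz avx avy hadj hadj'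
      · exact refute_2overlap hM hA hxy hxz hyz hvx hvy hvz hux huy huz huv.symm
          axy axz ayz avx avy hadj hadj'
      · exact refute_2same hM hA hxy hxz hyz hvx hvy hvz hux huy huz huv.symm
          axy axz ayz avx avy hadj' hadj
      · exact hne rfl
      · exact refute_2overlap hM hA (Ne.symm hxy) hyz hxz hvy hvx hvz huy hux huz
          huv.symm axy.symm ayz axz avy avx hadj hadj'
      · exact refute_2overlap hM hA hxy hxz hyz hvx hvy hvz hux huy huz huv.symm
          axy axz ayz avx avy hadj' hadj
      · exact refute_2overlap hM hA (Ne.symm hxy) hyz hxz hvy hvx hvz huy hux huz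
          huv.symm axy.symm ayz axz avy avx hadj' hadj
      · exact hne rfl
    refine ⟨t, ⟨hadj, ?_, hone⟩, fun t' ht' => hone t' ht'.1⟩
    have := hout u hux huy huz t hadj
    tauto

end Aux

theorem stmt16 {V : Type*} (G : SimpleGraph V) (hsp : SplitGraph G)
    (hc : G.Connected) :
    MDecyclable G ↔
      IsStar G ∨ IsDoubleStar G ∨ IsTriangleWithPendants G ∨
        IsDiamondWithPendants G := by
  constructor
  · rintro ⟨M, hM, hA⟩
    obtain ⟨K, I, hKI, hdisj, hcl, hind⟩ := hsp
    have hKadj : ∀ {u v : V}, u ∈ K → v ∈ K → u ≠ v → G.Adj u v := fun hu hv h => hcl hu hv h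
    by_cases h3 : ∃ x y z, x ∈ K ∧ y ∈ K ∧ z ∈ K ∧ x ≠ y ∧ x ≠ z ∧ y ≠ z
    · obtain ⟨x, y, z, hxK, hyK, hzK, hxy, hxz, hyz⟩ := h3
      have axy := hKadj hxK hyK hxy
      have axz := hKadj hxK hzK hxz
      have ayz := hKadj hyK hzK hyz
      have hKonly : ∀ u, u ∈ K → u = x ∨ u = y ∨ u = z := by
        intro u huK
        by_contra hcon
        push_neg at hcon
        obtain ⟨e1, e2, e3⟩ := hcon
        exact refute_K4 hM hA e1 e2 e3 hxy hxz hyz (hKadj huK hxK e1) (hKadj huK hyK e2)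
          (hKadj huK hzK e3) axy axz ayz
      have hout : ∀ u, u≠x → u≠y → u≠z → ∀ t, G.Adj u t → t = x ∨ t = y ∨ t = z := by
        intro u hux huy huz t hadj
        have huI : u ∈ I := by
          rcases hKI u with h | h
          · rcases hKonly u h with rfl|rfl|rfl <;> simp_all
          · exact h
        have htK : t ∈ K := by
          rcases hKI t with h | h
          · exact h
          · exact absurd hadj (hind u huI t h)
        exact hKonly t htK
      have hnall : ∀ u, u≠x → u≠y → u≠z → ¬(G.Adj u x ∧ G.Adj u y ∧ G.Adj u z) := by
        rintro u hux huy huz ⟨q1, q2, q3⟩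
        exact refute_K4 hM hA hux huy huz hxy hxz hyz q1 q2 q3 axy axz ayz
      by_cases hdeg2 : ∃ u, u≠x ∧ u≠y ∧ u≠z ∧
          ((G.Adj u x ∧ G.Adj u y) ∨ (G.Adj u x ∧ G.Adj u z) ∨ (G.Adj u y ∧ G.Adj u z))
      · right; right; right
        obtain ⟨v, hvx, hvy, hvz, hcase⟩ := hdeg2
        rcases hcase with ⟨a1, a2⟩ | ⟨a1, a2⟩ | ⟨a1, a2⟩
        · exact build_diamond hM hA hc hxy hxz hyz hvx hvy hvz axy axz ayz a1 a2 hout hnall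
        · refine build_diamond hM hA hc hxz hxy (Ne.symm hyz) hvx hvz hvy axz axy ayz.symm
            a1 a2 ?_ ?_
          · intro u e1 e2 e3 t ht
            have := hout u e1 e3 e2 t ht
            tauto
          · rintro u e1 e2 e3 ⟨q1, q2, q3⟩
            exact hnall u e1 e3 e2 ⟨q1, q3, q2⟩
        · refine build_diamond hM hA hc hyz (Ne.symm hxy) (Ne.symm hxz) hvy hvz hvx ayz
            axy.symm axz.symm a1 a2 ?_ ?_
          · intro u e1 e2 e3 t ht
            have := hout u e3 e1 e2 t ht
            tauto
          · rintro u e1 e2 e3 ⟨q1, q2, q3⟩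
            exact hnall u e3 e1 e2 ⟨q3, q1, q2⟩
      · right; right; left
        refine ⟨x, y, z, hxy, hxz, hyz, axy, axz, ayz, ?_⟩
        intro u hux huy huz
        obtain ⟨t, hadj⟩ := exists_nbr hc hux
        have hone : ∀ t', G.Adj u t' → t' = t := by
          intro t' h'
          by_contra hne
          have m1 := hout u hux huy huz t hadj
          have m2 := hout u hux huy huz t' h'
          apply hdeg2
          refine ⟨u, hux, huy, huz, ?_⟩
          rcases m1 with rfl|rfl|rfl <;> rcases m2 with rfl|rfl|rfl <;>
            first | exact absurd rfl hne | tauto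
        exact ⟨t, ⟨hadj, hout u hux huy huz t hadj, hone⟩, fun t' ht' => hone t' ht'.1⟩
    · by_cases h2 : ∃ x y, x ∈ K ∧ y ∈ K ∧ x ≠ y
      · obtain ⟨x, y, hxK, hyK, hxy⟩ := h2
        have axy := hKadj hxK hyK hxy
        have houtI : ∀ u, u ≠ x → u ≠ y → u ∈ I := by
          intro u e1 e2
          rcases hKI u with h | h
          · exact absurd ⟨x, y, u, hxK, hyK, h, hxy, Ne.symm e1, Ne.symm e2⟩ h3
          · exact h
        have hout2 : ∀ u, u≠x → u≠y → ∀ t, G.Adj u t → t = x ∨ t = y := by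
          intro u e1 e2 t hadj
          have huI := houtI u e1 e2
          have htK : t ∈ K := by
            rcases hKI t with h | h
            · exact h
            · exact absurd hadj (hind u huI t h)
          by_contra hcon
          push_neg at hcon
          exact h3 ⟨x, y, t, hxK, hyK, htK, hxy, Ne.symm hcon.1, Ne.symm hcon.2⟩
        by_cases hD2 : ∃ v, v ≠ x ∧ v ≠ y ∧ G.Adj v x ∧ G.Adj v y
        · obtain ⟨v, hvx, hvy, avx, avy⟩ := hD2
          by_cases hD2' : ∃ w, w ≠ x ∧ w ≠ y ∧ w ≠ v ∧ G.Adj w x ∧ G.Adj w y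
          · right; right; right
            obtain ⟨w, hwx, hwy, hwv, awx, awy⟩ := hD2'
            have hnvw : ¬ G.Adj v w := fun h => hind v (houtI v hvx hvy) w (houtI w hwx hwy) h
            refine ⟨x, v, y, w, ?_, avx.symm, axy, awx.symm, avy, awy.symm, hnvw, ?_⟩
            · simp [hvx, hvy, hwx, hwy, hwv, hxy, Ne.symm hvx, Ne.symm hvy, Ne.symm hwx, Ne.symm hwy, Ne.symm hwv]
            · intro u hux huv huy huw
              obtain ⟨t, hadj⟩ := exists_nbr hc hux
              have hone : ∀ t', G.Adj u t' → t' = t := by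
                intro t' h'
                by_contra hne
                have m1 := hout2 u hux huy t hadj
                have m2 := hout2 u hux huy t' h'
                have hboth : G.Adj u x ∧ G.Adj u y := by
                  rcases m1 with rfl|rfl <;> rcases m2 with rfl|rfl <;>
                    first | exact absurd rfl hne | exact ⟨hadj, h'⟩ | exact ⟨h', hadj⟩
                exact refute_3common hM hA hxy hux huy hvx hvy hwx hwy huv huw
                  (Ne.symm hwv) axy hboth.1.symm hboth.2.symm avx.symm avy.symm
                  awx.symm awy.symm
              refine ⟨t, ⟨hadj, ?_, hone⟩, fun t' ht' => hone t' ht'.1⟩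
              have := hout2 u hux huy t hadj
              tauto
          · right; right; left
            refine ⟨x, y, v, hxy, Ne.symm hvx, Ne.symm hvy, axy, avx.symm, avy.symm, ?_⟩
            intro u hux huy huv
            obtain ⟨t, hadj⟩ := exists_nbr hc hux
            have hone : ∀ t', G.Adj u t' → t' = t := by
              intro t' h'
              by_contra hne
              have m1 := hout2 u hux huy t hadj
              have m2 := hout2 u hux huy t' h'
              have hboth : G.Adj u x ∧ G.Adj u y := by
                rcases m1 with rfl|rfl <;> rcases m2 with rfl|rfl <;>
                  first | exact absurd rfl hne | exact ⟨hadj, h'⟩ | exact ⟨h', hadj⟩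
              exact hD2' ⟨u, hux, huy, huv, hboth.1, hboth.2⟩
            refine ⟨t, ⟨hadj, ?_, hone⟩, fun t' ht' => hone t' ht'.1⟩
            have := hout2 u hux huy t hadj
            tauto
        · right; left
          refine ⟨x, y, hxy, axy, ?_⟩
          intro u hux huy
          refine ⟨?_, ?_, fun w hw => hout2 u hux huy w hw⟩
          · obtain ⟨t, hadj⟩ := exists_nbr hc hux
            rcases hout2 u hux huy t hadj with rfl | rfl
            · exact Or.inl hadj.symm
            · exact Or.inr hadj.symm
          · rintro ⟨q1, q2⟩
            exact hD2 ⟨u, hux, huy, q1.symm, q2.symm⟩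
      · left
        by_cases hKne : ∃ cK, cK ∈ K
        · obtain ⟨c, hcK⟩ := hKne
          have hallI : ∀ u, u ≠ c → u ∈ I := fun u h =>
            (hKI u).resolve_left (fun hK => h2 ⟨u, c, hK, hcK, h⟩)
          refine ⟨c, ?_, ?_⟩
          · intro u hu
            obtain ⟨t, hadj⟩ := exists_nbr hc hu
            have htc : t = c := by
              by_contra htc
              exact hind u (hallI u hu) t (hallI t htc) hadj
            exact (htc ▸ hadj).symm
          · intro u w hadj
            by_contra hcon
            push_neg at hcon
            exact hind u (hallI u hcon.1) w (hallI w hcon.2) hadj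
        · push_neg at hKne
          have hnoadj : ∀ u w, ¬ G.Adj u w := by
            intro u w h
            exact hind u ((hKI u).resolve_left (hKne u)) w ((hKI w).resolve_left (hKne w)) h
          obtain ⟨c⟩ := hc.nonempty
          refine ⟨c, ?_, fun u w h => absurd h (hnoadj u w)⟩
          intro u hu
          obtain ⟨t, hadj⟩ := exists_nbr hc (Ne.symm hu)
          exact absurd hadj (hnoadj c t)
  · rintro (h | h | h | h)
    · exact star_dec h
    · exact dstar_dec h
    · exact tri_dec h
    · exact dia_dec h
end
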